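/- arXiv:1806.10786 — 6 statements merged into one kernel-verified Lean document; each statement's English description precedes it below -/
import Mathlib

section
/- Let N be a positive integer, χ* a primitive Dirichlet character modulo c* with (c*,N)=1, and m a positive integer. For Re(s) > 1, the Dirichlet series I^{(N)}(s, χ*, c*, m) = ∑_{ℓ ≥ 1, (ℓ,N)=1} g(χ*, ℓc*, m)·ℓ^{−s}, which is a generating function for the nonprimitive Gauss sums induced from χ*, converges and satisfies the identity τ(χ*)·m^{1−s}·σ^{(N)}_{s−1}(m, conj(χ*))·L^{(N)}(s, χ*)^{−1} = I^{(N)}(s, χ*, c*, m). -/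
open Complex
open scoped Classical

noncomputable section

/-- `e x = exp(2 π i x)`. -/
def e (x : ℝ) : ℂ := Complex.exp (2 * Real.pi * Complex.I * x)

/-- The standard additive character of `ZMod c`. -/
def eZMod (c : ℕ) (x : ZMod c) : ℂ :=
  Complex.exp (2 * Real.pi * Complex.I * (x.val : ℝ) / (c : ℝ))

/-- The classical Kloosterman sum `S(a, b; c)`. -/
def kloosterman (a b : ℤ) (c : ℕ) : ℂ :=
  if h : c = 0 then 0 else
    haveI : NeZero c := ⟨h⟩
    ∑ d : (ZMod c)ˣ,
      eZMod c ((a : ZMod c) * (d : ZMod c) + (b : ZMod c) * ((d⁻¹ : (ZMod c)ˣ) : ZMod c))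

/-- The Gauss sum `g(χ, c, m) = ∑_{u mod c, (u,c)=1} e(um/c) χ(u)`, for a Dirichlet character
`χ` modulo `n` (intended `n ∣ c`). -/
def gSum {n : ℕ} (χ : DirichletCharacter ℂ n) (c : ℕ) (m : ℤ) : ℂ :=
  if h : c = 0 then 0 else
    haveI : NeZero c := ⟨h⟩
    ∑ u : (ZMod c)ˣ, eZMod c ((m : ZMod c) * (u : ZMod c)) * χ (((u : ZMod c).val : ZMod n))

/-- The Gauss sum `τ(χ)` of a Dirichlet character modulo `n`. -/
def tau {n : ℕ} (χ : DirichletCharacter ℂ n) : ℂ := gSum χ n 1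

/-- The complex conjugate of a Dirichlet character. -/
def conjChar {n : ℕ} (χ : DirichletCharacter ℂ n) : DirichletCharacter ℂ n :=
  χ.ringHomComp (starRingEnd ℂ)

/-- `L^{(N)}(s,χ) = ∑_{n ≥ 1, (n,N)=1} χ(n) n^{-s}`. -/
def LN (N : ℕ) {n : ℕ} (χ : DirichletCharacter ℂ n) (s : ℂ) : ℂ :=
  ∑' k : ℕ, if Nat.Coprime (k + 1) N then
    χ (((k + 1 : ℕ) : ZMod n)) * ((k + 1 : ℕ) : ℂ) ^ (-s) else 0

/-- `σ^{(N)}_s(m,χ) = ∑_{d ∣ m, (d,N)=1} χ(m/d) (m/d)^s`. -/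
def sigmaN (N : ℕ) {n : ℕ} (χ : DirichletCharacter ℂ n) (s : ℂ) (m : ℕ) : ℂ :=
  ∑ d ∈ m.divisors.filter (fun d => Nat.Coprime d N),
    χ (((m / d : ℕ) : ZMod n)) * ((m / d : ℕ) : ℂ) ^ s

/-- The archimedean factor `G^k(s)`. -/
def Gk (N : ℕ) {M : ℕ} (ψ : DirichletCharacter ℂ M) (ε α β γ : ℂ) (k : ℕ) (s : ℂ) : ℂ :=
  Complex.I ^ k * tau ψ * ε * (N : ℂ) ^ ((1 : ℂ) / 2 - s) * (Real.pi : ℂ) ^ (3 * (s - 1 / 2)) *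
    (Complex.Gamma ((1 - s + k - α) / 2) / Complex.Gamma ((s + k + α) / 2)) *
    (Complex.Gamma ((1 - s + k - β) / 2) / Complex.Gamma ((s + k + β) / 2)) *
    (Complex.Gamma ((1 - s + k - γ) / 2) / Complex.Gamma ((s + k + γ) / 2))

/-- `G₊ = G⁰` if `ψ(-1) = 1` and `G₊ = G¹` otherwise. -/
def Gplus (N : ℕ) {M : ℕ} (ψ : DirichletCharacter ℂ M) (ε α β γ : ℂ) (s : ℂ) : ℂ :=
  if ψ (-1) = 1 then Gk N ψ ε α β γ 0 s else Gk N ψ ε α β γ 1 s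

/-- `G₋ = G¹` if `ψ(-1) = 1` and `G₋ = G⁰` otherwise. -/
def Gminus (N : ℕ) {M : ℕ} (ψ : DirichletCharacter ℂ M) (ε α β γ : ℂ) (s : ℂ) : ℂ :=
  if ψ (-1) = 1 then Gk N ψ ε α β γ 1 s else Gk N ψ ε α β γ 0 s

/-- `G_± = G₊` if `χ(-1) = 1` and `G_± = G₋` if `χ(-1) = -1`. -/
def Gpm (N : ℕ) {M n : ℕ} (ψ : DirichletCharacter ℂ M) (ε α β γ : ℂ)
    (χ : DirichletCharacter ℂ n) (s : ℂ) : ℂ :=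
  if χ (-1) = 1 then Gplus N ψ ε α β γ s else Gminus N ψ ε α β γ s

/-- The right-hand side `∑_{abc=m, b ∣ n₁, c ∣ n₂} A(bn₂/c, an₁/b) ψ(c)` of the Hecke
relation. -/
def heckeRHS2 {M : ℕ} (ψ : DirichletCharacter ℂ M) (A : ℕ → ℕ → ℂ) (m n₁ n₂ : ℕ) : ℂ :=
  ∑ t ∈ (Finset.range (m + 1) ×ˢ Finset.range (m + 1) ×ˢ Finset.range (m + 1)).filter
      (fun t => t.1 * (t.2.1 * t.2.2) = m ∧ t.2.1 ∣ n₁ ∧ t.2.2 ∣ n₂),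
    A (t.2.1 * n₂ / t.2.2) (t.1 * n₁ / t.2.1) * ψ ((t.2.2 : ℕ) : ZMod M)

/-- The right-hand side `∑_{abc=n, a ∣ n₁, b ∣ n₂} ψ(ab) A(cn₂/b, bn₁/a)` of the other Hecke
relation. -/
def heckeRHS1 {M : ℕ} (ψ : DirichletCharacter ℂ M) (A : ℕ → ℕ → ℂ) (n n₁ n₂ : ℕ) : ℂ :=
  ∑ t ∈ (Finset.range (n + 1) ×ˢ Finset.range (n + 1) ×ˢ Finset.range (n + 1)).filter
      (fun t => t.1 * (t.2.1 * t.2.2) = n ∧ t.1 ∣ n₁ ∧ t.2.1 ∣ n₂),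
    ψ ((t.1 * t.2.1 : ℕ) : ZMod M) * A (t.2.2 * n₂ / t.2.1) (t.2.1 * n₁ / t.1)

namespace St2

/-- `exp(2πi a / q)` for naturals. -/
def eE (q a : ℕ) : ℂ := Complex.exp (2 * Real.pi * Complex.I * (a : ℝ) / (q : ℝ))

lemma eE_add (q a b : ℕ) : eE q (a + b) = eE q a * eE q b := by
  rw [eE, eE, eE, ← Complex.exp_add]
  congr 1
  push_cast
  by_cases hq : (q : ℂ) = 0
  · simp [hq]
  · field_simp

lemma eE_mul_self (q k : ℕ) (hq : q ≠ 0) : eE q (q * k) = 1 := by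
  have h : (2 * (Real.pi:ℂ) * Complex.I * ((q * k : ℕ) : ℝ) / (q : ℝ)) = (k : ℤ) * (2 * Real.pi * Complex.I) := by
    have hq' : (q : ℂ) ≠ 0 := by exact_mod_cast hq
    push_cast
    field_simp
  rw [eE, h, Complex.exp_int_mul_two_pi_mul_I]

lemma eE_add_mul (q a k : ℕ) (hq : q ≠ 0) : eE q (a + q * k) = eE q a := by
  rw [eE_add, eE_mul_self q k hq, mul_one]

lemma eE_mod (q a : ℕ) (hq : q ≠ 0) : eE q (a % q) = eE q a := by
  conv_rhs => rw [← Nat.mod_add_div a q]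
  rw [eE_add_mul _ _ _ hq]

lemma eE_cancel (d q a : ℕ) (hd : d ≠ 0) : eE (d * q) (d * a) = eE q a := by
  rw [eE, eE]
  congr 1
  push_cast
  have hd' : (d : ℂ) ≠ 0 := by exact_mod_cast hd
  by_cases hq : (q : ℂ) = 0
  · simp [hq]
  · field_simp

lemma eE_pow (q a t : ℕ) : eE q (a * t) = (eE q a) ^ t := by
  induction t with
  | zero => simp [eE]
  | succ n ih => rw [Nat.mul_succ, eE_add, ih, pow_succ]

lemma eE_eq_one_iff (q a : ℕ) (hq : q ≠ 0) : eE q a = 1 ↔ q ∣ a := by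
  constructor
  · intro h
    rw [eE, Complex.exp_eq_one_iff] at h
    obtain ⟨k, hk⟩ := h
    have hq' : (q : ℂ) ≠ 0 := by exact_mod_cast hq
    have h2 : (2 * (Real.pi:ℂ) * Complex.I) ≠ 0 := by
      simp [Real.pi_ne_zero, Complex.I_ne_zero]
    have key : (a : ℂ) = k * q := by
      field_simp at hk
      refine mul_left_cancel₀ h2 ?_
      push_cast at hk; rw [div_eq_iff hq'] at hk; rw [hk]
    have key' : (a : ℤ) = k * q := by exact_mod_cast key
    have : (q : ℤ) ∣ (a : ℤ) := ⟨k, by rw [key']; ring⟩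
    exact_mod_cast this
  · rintro ⟨k, rfl⟩
    exact eE_mul_self q k hq






lemma eZMod_natCast (q : ℕ) [NeZero q] (a : ℕ) : eZMod q ((a : ℕ) : ZMod q) = eE q a := by
  rw [eZMod, ZMod.val_natCast]
  exact eE_mod q a (NeZero.ne q)

lemma sum_zmod_eq_sum_range {c : ℕ} [NeZero c] (F : ZMod c → ℂ) :
    ∑ a : ZMod c, F a = ∑ i ∈ Finset.range c, F (i : ZMod c) := by
  refine Finset.sum_nbij' (fun a => a.val) (fun i => (i : ZMod c)) ?_ ?_ ?_ ?_ ?_ <;>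
    intro a ha
  · exact Finset.mem_range.mpr (ZMod.val_lt a)
  · exact Finset.mem_univ _
  · exact ZMod.natCast_rightInverse a
  · exact ZMod.val_natCast_of_lt (Finset.mem_range.mp ha)
  · rw [ZMod.natCast_rightInverse a]

lemma sum_units_eq_sum_range {c : ℕ} [NeZero c] (F : ZMod c → ℂ) :
    ∑ u : (ZMod c)ˣ, F u
      = ∑ i ∈ (Finset.range c).filter (fun i => Nat.Coprime i c), F ((i : ℕ) : ZMod c) := by
  refine Finset.sum_bij (fun (u : (ZMod c)ˣ) _ => ((u : ZMod c)).val) ?_ ?_ ?_ ?_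
  · intro u _
    exact Finset.mem_filter.mpr ⟨Finset.mem_range.mpr (ZMod.val_lt _), ZMod.val_coe_unit_coprime u⟩
  · intro u _ v _ h
    apply Units.ext
    exact ZMod.val_injective _ h
  · intro i hi
    obtain ⟨hi1, hi2⟩ := Finset.mem_filter.mp hi
    refine ⟨ZMod.unitOfCoprime i hi2, Finset.mem_univ _, ?_⟩
    show ((ZMod.unitOfCoprime i hi2 : ZMod c)).val = i
    rw [ZMod.coe_unitOfCoprime, ZMod.val_natCast_of_lt (Finset.mem_range.mp hi1)]
  · intro u _
    congr 1
    exact (ZMod.natCast_rightInverse _).symm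

lemma gSum_eq_range {cstar : ℕ} (χ : DirichletCharacter ℂ cstar) (c : ℕ) (hc : c ≠ 0) (m : ℕ) :
    gSum χ c (m : ℤ) = ∑ u ∈ (Finset.range c).filter (fun u => Nat.Coprime u c),
      eE c (m * u) * χ ((u : ℕ) : ZMod cstar) := by
  haveI : NeZero c := ⟨hc⟩
  rw [gSum, dif_neg hc]
  rw [sum_units_eq_sum_range (fun x => eZMod c (((m : ℤ) : ZMod c) * x) * χ ((x.val : ZMod cstar)))]
  refine Finset.sum_congr rfl fun i hi => ?_
  obtain ⟨hi1, _⟩ := Finset.mem_filter.mp hi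
  have h1 : (((m : ℤ) : ZMod c) * ((i : ℕ) : ZMod c)) = (((m * i : ℕ) : ℕ) : ZMod c) := by
    push_cast; ring
  rw [h1, eZMod_natCast, ZMod.val_natCast_of_lt (Finset.mem_range.mp hi1)]

lemma stdAddChar_natCast (q : ℕ) [NeZero q] (a : ℕ) :
    ZMod.stdAddChar ((a : ℕ) : ZMod q) = eE q a := by
  have h := ZMod.stdAddChar_coe (N := q) (a : ℤ)
  rw [eE]
  push_cast at h ⊢
  rw [← h]

lemma conjChar_apply_eq_inv {n : ℕ} (χ : DirichletCharacter ℂ n) (x : ZMod n) :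
    conjChar χ x = χ⁻¹ x := by
  rw [MulChar.inv_apply_eq_inv]
  by_cases hx : IsUnit x
  · have hn : ‖χ x‖ = 1 := by
      have := DirichletCharacter.unit_norm_eq_one χ hx.unit
      rwa [IsUnit.unit_spec] at this
    have hns : Complex.normSq (χ x) = 1 := by
      rw [Complex.normSq_eq_norm_sq, hn, one_pow]
    have h1 : (starRingEnd ℂ) (χ x) * χ x = 1 := by
      rw [mul_comm, Complex.mul_conj, hns, Complex.ofReal_one]
    show (starRingEnd ℂ) (χ x) = Ring.inverse (χ x)
    rw [Ring.inverse_eq_inv']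
    exact eq_inv_of_mul_eq_one_left h1
  · show (starRingEnd ℂ) (χ x) = Ring.inverse (χ x)
    rw [χ.map_nonunit hx]
    simp

lemma tau_eq_gaussSum {cstar : ℕ} [NeZero cstar] (χ : DirichletCharacter ℂ cstar) :
    tau χ = gaussSum χ ZMod.stdAddChar := by
  rw [tau, show (1 : ℤ) = ((1 : ℕ) : ℤ) by norm_num,
    gSum_eq_range χ cstar (NeZero.ne cstar) 1, gaussSum, sum_zmod_eq_sum_range]
  calc ∑ u ∈ (Finset.range cstar).filter (fun u => Nat.Coprime u cstar),
        eE cstar (1 * u) * χ ((u : ℕ) : ZMod cstar)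
      = ∑ u ∈ (Finset.range cstar).filter (fun u => Nat.Coprime u cstar),
        χ ((u : ℕ) : ZMod cstar) * ZMod.stdAddChar ((u : ℕ) : ZMod cstar) :=
        Finset.sum_congr rfl (fun i _ => by rw [stdAddChar_natCast, one_mul, mul_comm])
    _ = ∑ i ∈ Finset.range cstar,
        χ ((i : ℕ) : ZMod cstar) * ZMod.stdAddChar ((i : ℕ) : ZMod cstar) := by
        refine Finset.sum_filter_of_ne fun i _ hne => ?_
        by_contra hcop
        apply hne
        rw [χ.map_nonunit (by rwa [ZMod.isUnit_iff_coprime]), zero_mul]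

lemma char_sum {cstar : ℕ} [NeZero cstar] {χ : DirichletCharacter ℂ cstar}
    (hprim : χ.IsPrimitive) (a : ℕ) :
    ∑ w ∈ Finset.range cstar, eE cstar (a * w) * χ ((w : ℕ) : ZMod cstar)
      = conjChar χ ((a : ℕ) : ZMod cstar) * tau χ := by
  have h := gaussSum_mulShift_of_isPrimitive (ZMod.stdAddChar) hprim ((a : ℕ) : ZMod cstar)
  rw [conjChar_apply_eq_inv, tau_eq_gaussSum, ← h, gaussSum, sum_zmod_eq_sum_range]
  refine Finset.sum_congr rfl fun i _ => ?_
  rw [AddChar.mulShift_apply, show ((a : ℕ) : ZMod cstar) * ((i : ℕ) : ZMod cstar)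
    = (((a * i : ℕ) : ℕ) : ZMod cstar) by push_cast; ring, stdAddChar_natCast, mul_comm]

lemma full_sum {cstar : ℕ} [NeZero cstar] (χ : DirichletCharacter ℂ cstar)
    (m n : ℕ) (hn : n ≠ 0) :
    ∑ v ∈ Finset.range (n * cstar), eE (n * cstar) (m * v) * χ ((v : ℕ) : ZMod cstar)
      = if n ∣ m then (n : ℂ) * ∑ w ∈ Finset.range cstar,
          eE cstar ((m / n) * w) * χ ((w : ℕ) : ZMod cstar) else 0 := by
  have hcs : cstar ≠ 0 := NeZero.ne cstar
  -- reindex v = w + cstar * t with (t, w) ∈ range n ×ˢ range cstar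
  have hre : ∑ v ∈ Finset.range (n * cstar), eE (n * cstar) (m * v) * χ ((v : ℕ) : ZMod cstar)
      = ∑ p ∈ Finset.range n ×ˢ Finset.range cstar,
          eE (n * cstar) (m * (p.2 + cstar * p.1)) * χ (((p.2 + cstar * p.1 : ℕ)) : ZMod cstar) := by
    refine Finset.sum_nbij' (fun v => (v / cstar, v % cstar)) (fun p => p.2 + cstar * p.1)
      ?_ ?_ ?_ ?_ ?_
    · intro v hv
      rw [Finset.mem_range] at hv
      refine Finset.mem_product.mpr ⟨Finset.mem_range.mpr ?_, Finset.mem_range.mpr ?_⟩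
      · exact Nat.div_lt_of_lt_mul (by rwa [mul_comm] at hv)
      · exact Nat.mod_lt _ (Nat.pos_of_ne_zero hcs)
    · intro p hp
      obtain ⟨h1, h2⟩ := Finset.mem_product.mp hp
      rw [Finset.mem_range] at h1 h2
      refine Finset.mem_range.mpr ?_
      calc p.2 + cstar * p.1 < cstar + cstar * p.1 := by omega
        _ = cstar * (p.1 + 1) := by ring
        _ ≤ cstar * n := Nat.mul_le_mul_left _ (by omega)
        _ = n * cstar := mul_comm _ _
    · intro v _
      exact (Nat.mod_add_div v cstar)
    · intro p hp
      obtain ⟨_, h2⟩ := Finset.mem_product.mp hp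
      rw [Finset.mem_range] at h2
      ext
      · simp only []
        rw [Nat.add_mul_div_left _ _ (Nat.pos_of_ne_zero hcs), Nat.div_eq_of_lt h2, zero_add]
      · simp only []
        rw [Nat.add_mul_mod_self_left, Nat.mod_eq_of_lt h2]
    · intro v _
      rw [Nat.mod_add_div v cstar]
  rw [hre, Finset.sum_product]
  have hterm : ∀ t ∈ Finset.range n, ∀ w ∈ Finset.range cstar,
      eE (n * cstar) (m * (w + cstar * t)) * χ (((w + cstar * t : ℕ)) : ZMod cstar)
      = (eE n m) ^ t * (eE (n * cstar) (m * w) * χ ((w : ℕ) : ZMod cstar)) := by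
    intro t _ w _
    have hchi : (((w + cstar * t : ℕ)) : ZMod cstar) = ((w : ℕ) : ZMod cstar) := by
      push_cast
      simp
    rw [hchi]
    have heE : eE (n * cstar) (m * (w + cstar * t)) = eE (n * cstar) (m * w) * (eE n m) ^ t := by
      rw [show m * (w + cstar * t) = m * w + cstar * (m * t) by ring, eE_add,
        show n * cstar = cstar * n by ring, eE_cancel cstar n (m * t) hcs, eE_pow n m t]
    rw [heE]; ring
  rw [Finset.sum_congr rfl (fun t ht => Finset.sum_congr rfl (fun w hw => hterm t ht w hw))]
  simp_rw [← Finset.mul_sum]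
  rw [← Finset.sum_mul]
  by_cases hdvd : n ∣ m
  · rw [if_pos hdvd]
    have hz : eE n m = 1 := by
      obtain ⟨k, hk⟩ := hdvd
      rw [hk]; exact eE_mul_self n k hn
    have hgeo : ∑ t ∈ Finset.range n, (eE n m) ^ t = (n : ℂ) := by
      simp [hz]
    rw [hgeo]
    congr 1
    refine Finset.sum_congr rfl fun w _ => ?_
    congr 1
    have : m * w = n * ((m / n) * w) := by
      rw [← mul_assoc, Nat.mul_div_cancel' hdvd]
    rw [this, eE_cancel n cstar _ hn]
  · rw [if_neg hdvd]
    have hz : eE n m ≠ 1 := fun h => hdvd ((eE_eq_one_iff n m hn).mp h)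
    have hpow : (eE n m) ^ n = 1 := by
      rw [← eE_pow, mul_comm, eE_mul_self n m hn]
    rw [geom_sum_eq hz, hpow]
    simp

lemma key {cstar : ℕ} [NeZero cstar] {χ : DirichletCharacter ℂ cstar}
    (hprim : χ.IsPrimitive) (m n : ℕ) (hn : n ≠ 0) :
    ∑ p ∈ n.divisorsAntidiagonal, χ ((p.1 : ℕ) : ZMod cstar) * gSum χ (p.2 * cstar) (m : ℤ)
      = if n ∣ m then (n : ℂ) * (tau χ * conjChar χ (((m / n : ℕ)) : ZMod cstar)) else 0 := by
  have hcs : cstar ≠ 0 := NeZero.ne cstar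
  have h1 : ∑ p ∈ n.divisorsAntidiagonal, χ ((p.1 : ℕ) : ZMod cstar) * gSum χ (p.2 * cstar) (m : ℤ)
      = ∑ p ∈ n.divisorsAntidiagonal.filter (fun p => Nat.Coprime p.1 cstar),
          χ ((p.1 : ℕ) : ZMod cstar) * gSum χ (p.2 * cstar) (m : ℤ) := by
    refine (Finset.sum_filter_of_ne fun p _ hne => ?_).symm
    by_contra hcop
    apply hne
    rw [χ.map_nonunit (by rwa [ZMod.isUnit_iff_coprime]), zero_mul]
  rw [h1]
  have h2 : ∀ p ∈ n.divisorsAntidiagonal.filter (fun p => Nat.Coprime p.1 cstar),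
      χ ((p.1 : ℕ) : ZMod cstar) * gSum χ (p.2 * cstar) (m : ℤ)
      = ∑ u ∈ (Finset.range (p.2 * cstar)).filter (fun u => Nat.Coprime u (p.2 * cstar)),
          χ ((p.1 : ℕ) : ZMod cstar) * (eE (p.2 * cstar) (m * u) * χ ((u : ℕ) : ZMod cstar)) := by
    intro p hp
    obtain ⟨hp1, _⟩ := Finset.mem_filter.mp hp
    obtain ⟨hpe, hn0⟩ := Nat.mem_divisorsAntidiagonal.mp hp1
    have hp2 : p.2 ≠ 0 := fun h => hn0 (by rw [← hpe, h, mul_zero])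
    rw [gSum_eq_range χ _ (Nat.mul_ne_zero hp2 hcs) m, Finset.mul_sum]
  rw [Finset.sum_congr rfl h2, Finset.sum_sigma']
  have hbij : ∑ x ∈ (n.divisorsAntidiagonal.filter (fun p => Nat.Coprime p.1 cstar)).sigma
        (fun p => (Finset.range (p.2 * cstar)).filter (fun u => Nat.Coprime u (p.2 * cstar))),
        χ ((x.1.1 : ℕ) : ZMod cstar) * (eE (x.1.2 * cstar) (m * x.2) * χ ((x.2 : ℕ) : ZMod cstar))
      = ∑ v ∈ (Finset.range (n * cstar)).filter (fun v => Nat.Coprime v cstar),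
          eE (n * cstar) (m * v) * χ ((v : ℕ) : ZMod cstar) := by
    refine Finset.sum_nbij' (fun x => x.1.1 * x.2)
      (fun v => ⟨(Nat.gcd v n, n / Nat.gcd v n), v / Nat.gcd v n⟩) ?_ ?_ ?_ ?_ ?_
    · rintro ⟨⟨d, e⟩, u⟩ hx
      obtain ⟨hx1, hx2⟩ := Finset.mem_sigma.mp hx
      obtain ⟨hx1', hdc⟩ := Finset.mem_filter.mp hx1
      obtain ⟨hde, hn0⟩ := Nat.mem_divisorsAntidiagonal.mp hx1'
      obtain ⟨hu1, hu2⟩ := Finset.mem_filter.mp hx2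
      rw [Finset.mem_range] at hu1
      have hd : d ≠ 0 := fun h => hn0 (by rw [← hde, h, zero_mul])
      refine Finset.mem_filter.mpr ⟨Finset.mem_range.mpr ?_, ?_⟩
      · calc d * u < d * (e * cstar) :=
              (Nat.mul_lt_mul_left (Nat.pos_of_ne_zero hd)).mpr hu1
          _ = n * cstar := by rw [← mul_assoc, hde]
      · exact Nat.Coprime.mul
          (m := d) (k := cstar) hdc
          (Nat.Coprime.coprime_dvd_right (dvd_mul_left cstar e) hu2)
    · intro v hv
      obtain ⟨hv1, hvc⟩ := Finset.mem_filter.mp hv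
      rw [Finset.mem_range] at hv1
      have hdn : Nat.gcd v n ∣ n := Nat.gcd_dvd_right v n
      have hdv : Nat.gcd v n ∣ v := Nat.gcd_dvd_left v n
      have hdpos : 0 < Nat.gcd v n := Nat.gcd_pos_of_pos_right v (Nat.pos_of_ne_zero hn)
      refine Finset.mem_sigma.mpr ⟨Finset.mem_filter.mpr ⟨?_, ?_⟩, Finset.mem_filter.mpr ⟨?_, ?_⟩⟩
      · exact Nat.mem_divisorsAntidiagonal.mpr ⟨Nat.mul_div_cancel' hdn, hn⟩
      · exact Nat.Coprime.coprime_dvd_left hdv hvc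
      · refine Finset.mem_range.mpr ?_
        rw [Nat.div_lt_iff_lt_mul hdpos]
        calc v < n * cstar := hv1
          _ = n / Nat.gcd v n * cstar * Nat.gcd v n := by
              rw [mul_comm _ (Nat.gcd v n), ← mul_assoc, Nat.mul_div_cancel' hdn]
      · refine Nat.Coprime.mul_right (Nat.coprime_div_gcd_div_gcd hdpos) ?_
        refine Nat.Coprime.coprime_dvd_left ⟨Nat.gcd v n, (Nat.div_mul_cancel hdv).symm⟩ hvc
    · rintro ⟨⟨d, e⟩, u⟩ hx
      obtain ⟨hx1, hx2⟩ := Finset.mem_sigma.mp hx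
      obtain ⟨hx1', hdc⟩ := Finset.mem_filter.mp hx1
      obtain ⟨hde, hn0⟩ := Nat.mem_divisorsAntidiagonal.mp hx1'
      obtain ⟨_, hu2⟩ := Finset.mem_filter.mp hx2
      have hd : d ≠ 0 := fun h => hn0 (by rw [← hde, h, zero_mul])
      have hue : Nat.Coprime u e := Nat.Coprime.coprime_dvd_right (dvd_mul_right e cstar) hu2
      have hgcd : Nat.gcd (d * u) n = d := by
        rw [← hde, Nat.gcd_mul_left, hue.gcd_eq_one, mul_one]
      show (⟨(Nat.gcd (d * u) n, n / Nat.gcd (d * u) n), d * u / Nat.gcd (d * u) n⟩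
        : Σ _ : ℕ × ℕ, ℕ) = ⟨(d, e), u⟩
      rw [hgcd, Nat.mul_div_cancel_left u (Nat.pos_of_ne_zero hd), ← hde,
        Nat.mul_div_cancel_left e (Nat.pos_of_ne_zero hd)]
    · intro v hv
      show Nat.gcd v n * (v / Nat.gcd v n) = v
      exact Nat.mul_div_cancel' (Nat.gcd_dvd_left v n)
    · rintro ⟨⟨d, e⟩, u⟩ hx
      obtain ⟨hx1, hx2⟩ := Finset.mem_sigma.mp hx
      obtain ⟨hx1', hdc⟩ := Finset.mem_filter.mp hx1
      obtain ⟨hde, hn0⟩ := Nat.mem_divisorsAntidiagonal.mp hx1'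
      have hd : d ≠ 0 := fun h => hn0 (by rw [← hde, h, zero_mul])
      show χ ((d : ℕ) : ZMod cstar) * (eE (e * cstar) (m * u) * χ ((u : ℕ) : ZMod cstar))
        = eE (n * cstar) (m * (d * u)) * χ (((d * u : ℕ)) : ZMod cstar)
      have heE : eE (n * cstar) (m * (d * u)) = eE (e * cstar) (m * u) := by
        rw [show n * cstar = d * (e * cstar) by rw [← hde]; ring,
          show m * (d * u) = d * (m * u) by ring, eE_cancel d _ _ hd]
      have hchi : χ (((d * u : ℕ)) : ZMod cstar)
          = χ ((d : ℕ) : ZMod cstar) * χ ((u : ℕ) : ZMod cstar) := by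
        push_cast
        rw [map_mul]
      rw [heE, hchi]; ring
  rw [hbij]
  have h5 : ∑ v ∈ (Finset.range (n * cstar)).filter (fun v => Nat.Coprime v cstar),
        eE (n * cstar) (m * v) * χ ((v : ℕ) : ZMod cstar)
      = ∑ v ∈ Finset.range (n * cstar), eE (n * cstar) (m * v) * χ ((v : ℕ) : ZMod cstar) := by
    refine Finset.sum_filter_of_ne fun v _ hne => ?_
    by_contra hcop
    apply hne
    rw [χ.map_nonunit (by rwa [ZMod.isUnit_iff_coprime]), mul_zero]
  rw [h5, full_sum χ m n hn]
  by_cases hdvd : n ∣ m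
  · rw [if_pos hdvd, if_pos hdvd, char_sum hprim (m / n), mul_comm (conjChar χ _) (tau χ)]
  · rw [if_neg hdvd, if_neg hdvd]




def FA (N cstar : ℕ) (χ : DirichletCharacter ℂ cstar) : ArithmeticFunction ℂ :=
  ⟨fun n => if n ≠ 0 ∧ n.Coprime N then χ ((n : ℕ) : ZMod cstar) else 0, by simp⟩

def MA (N cstar : ℕ) (χ : DirichletCharacter ℂ cstar) : ArithmeticFunction ℂ :=
  ⟨fun n => if n ≠ 0 ∧ n.Coprime N then (ArithmeticFunction.moebius n : ℂ) * χ ((n : ℕ) : ZMod cstar)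
    else 0, by simp⟩

def GA (N cstar : ℕ) (χ : DirichletCharacter ℂ cstar) (m : ℕ) : ArithmeticFunction ℂ :=
  ⟨fun n => if n ≠ 0 ∧ n.Coprime N then gSum χ (n * cstar) (m : ℤ) else 0, by simp⟩

def HA (N cstar : ℕ) (χ : DirichletCharacter ℂ cstar) (m : ℕ) : ArithmeticFunction ℂ :=
  ⟨fun n => if n ≠ 0 ∧ n ∣ m ∧ n.Coprime N then
    (n : ℂ) * (tau χ * conjChar χ (((m / n : ℕ)) : ZMod cstar)) else 0, by simp⟩

lemma FA_apply (N cstar : ℕ) (χ : DirichletCharacter ℂ cstar) (n : ℕ) :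
    FA N cstar χ n = if n ≠ 0 ∧ n.Coprime N then χ ((n : ℕ) : ZMod cstar) else 0 := rfl
lemma MA_apply (N cstar : ℕ) (χ : DirichletCharacter ℂ cstar) (n : ℕ) :
    MA N cstar χ n = if n ≠ 0 ∧ n.Coprime N then
      (ArithmeticFunction.moebius n : ℂ) * χ ((n : ℕ) : ZMod cstar) else 0 := rfl
lemma GA_apply (N cstar : ℕ) (χ : DirichletCharacter ℂ cstar) (m n : ℕ) :
    GA N cstar χ m n = if n ≠ 0 ∧ n.Coprime N then gSum χ (n * cstar) (m : ℤ) else 0 := rfl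
lemma HA_apply (N cstar : ℕ) (χ : DirichletCharacter ℂ cstar) (m n : ℕ) :
    HA N cstar χ m n = if n ≠ 0 ∧ n ∣ m ∧ n.Coprime N then
      (n : ℂ) * (tau χ * conjChar χ (((m / n : ℕ)) : ZMod cstar)) else 0 := rfl

lemma hFG {N cstar : ℕ} [NeZero cstar] {χ : DirichletCharacter ℂ cstar}
    (hprim : χ.IsPrimitive) (m : ℕ) :
    FA N cstar χ * GA N cstar χ m = HA N cstar χ m := by
  ext n
  rcases eq_or_ne n 0 with rfl | hn
  · simp
  rw [ArithmeticFunction.mul_apply, HA_apply]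
  by_cases hcop : n.Coprime N
  · have hterm : ∀ p ∈ n.divisorsAntidiagonal, FA N cstar χ p.1 * GA N cstar χ m p.2
        = χ ((p.1 : ℕ) : ZMod cstar) * gSum χ (p.2 * cstar) (m : ℤ) := by
      intro p hp
      obtain ⟨hpe, hn0⟩ := Nat.mem_divisorsAntidiagonal.mp hp
      have h1 : p.1 ≠ 0 := fun h => hn0 (by rw [← hpe, h, zero_mul])
      have h2 : p.2 ≠ 0 := fun h => hn0 (by rw [← hpe, h, mul_zero])
      have c1 : p.1.Coprime N := Nat.Coprime.coprime_dvd_left ⟨p.2, hpe.symm⟩ hcop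
      have c2 : p.2.Coprime N := Nat.Coprime.coprime_dvd_left ⟨p.1, by rw [← hpe]; ring⟩ hcop
      rw [FA_apply, GA_apply, if_pos ⟨h1, c1⟩, if_pos ⟨h2, c2⟩]
    rw [Finset.sum_congr rfl hterm, key hprim m n hn]
    by_cases hdvd : n ∣ m
    · rw [if_pos hdvd, if_pos ⟨hn, hdvd, hcop⟩]
    · rw [if_neg hdvd, if_neg (by tauto)]
  · rw [if_neg (by tauto)]
    refine Finset.sum_eq_zero fun p hp => ?_
    obtain ⟨hpe, hn0⟩ := Nat.mem_divisorsAntidiagonal.mp hp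
    by_cases c1 : p.1.Coprime N
    · have c2 : ¬ p.2.Coprime N := fun c2 => hcop (hpe ▸ Nat.Coprime.mul c1 c2)
      rw [GA_apply, if_neg (by tauto), mul_zero]
    · rw [FA_apply, if_neg (by tauto), zero_mul]

lemma hMF {N cstar : ℕ} [NeZero cstar] (χ : DirichletCharacter ℂ cstar) :
    MA N cstar χ * FA N cstar χ = 1 := by
  ext n
  rcases eq_or_ne n 0 with rfl | hn
  · simp
  rw [ArithmeticFunction.mul_apply, ArithmeticFunction.one_apply]
  have hmoeb : ∑ p ∈ n.divisorsAntidiagonal, ((ArithmeticFunction.moebius p.1 : ℤ) : ℂ)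
      = if n = 1 then 1 else 0 := by
    have h : (ArithmeticFunction.moebius * (ArithmeticFunction.zeta : ArithmeticFunction ℤ)) n
        = (1 : ArithmeticFunction ℤ) n := by
      rw [ArithmeticFunction.moebius_mul_coe_zeta]
    rw [ArithmeticFunction.mul_apply, ArithmeticFunction.one_apply] at h
    have h2 : ∑ p ∈ n.divisorsAntidiagonal, (ArithmeticFunction.moebius p.1 : ℤ)
        = if n = 1 then 1 else 0 := by
      rw [← h]
      refine Finset.sum_congr rfl fun p hp => ?_
      obtain ⟨hpe, hn0⟩ := Nat.mem_divisorsAntidiagonal.mp hp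
      have h2' : p.2 ≠ 0 := fun h => hn0 (by rw [← hpe, h, mul_zero])
      rw [ArithmeticFunction.natCoe_apply, ArithmeticFunction.zeta_apply_ne h2', Nat.cast_one,
        mul_one]
    exact_mod_cast congrArg (fun z : ℤ => (z : ℂ)) h2
  by_cases hcop : n.Coprime N
  · have hterm : ∀ p ∈ n.divisorsAntidiagonal, MA N cstar χ p.1 * FA N cstar χ p.2
        = ((ArithmeticFunction.moebius p.1 : ℤ) : ℂ) * χ ((n : ℕ) : ZMod cstar) := by
      intro p hp
      obtain ⟨hpe, hn0⟩ := Nat.mem_divisorsAntidiagonal.mp hp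
      have h1 : p.1 ≠ 0 := fun h => hn0 (by rw [← hpe, h, zero_mul])
      have h2 : p.2 ≠ 0 := fun h => hn0 (by rw [← hpe, h, mul_zero])
      have c1 : p.1.Coprime N := Nat.Coprime.coprime_dvd_left ⟨p.2, hpe.symm⟩ hcop
      have c2 : p.2.Coprime N := Nat.Coprime.coprime_dvd_left ⟨p.1, by rw [← hpe]; ring⟩ hcop
      rw [MA_apply, FA_apply, if_pos ⟨h1, c1⟩, if_pos ⟨h2, c2⟩]
      have : χ ((n : ℕ) : ZMod cstar) = χ ((p.1 : ℕ) : ZMod cstar) * χ ((p.2 : ℕ) : ZMod cstar) := by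
        rw [← map_mul, ← Nat.cast_mul, hpe]
      rw [this]; ring
    rw [Finset.sum_congr rfl hterm, ← Finset.sum_mul, hmoeb]
    rcases eq_or_ne n 1 with rfl | hn1
    · simp
    · rw [if_neg hn1, zero_mul]
  · have hn1 : n ≠ 1 := fun h => hcop (h ▸ Nat.coprime_one_left N)
    rw [if_neg hn1]
    refine Finset.sum_eq_zero fun p hp => ?_
    obtain ⟨hpe, hn0⟩ := Nat.mem_divisorsAntidiagonal.mp hp
    by_cases c1 : p.1.Coprime N
    · have c2 : ¬ p.2.Coprime N := fun c2 => hcop (hpe ▸ Nat.Coprime.mul c1 c2)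
      rw [FA_apply, if_neg (by tauto), mul_zero]
    · rw [MA_apply, if_neg (by tauto), zero_mul]


lemma sumF {N cstar : ℕ} (χ : DirichletCharacter ℂ cstar) {s : ℂ} (hs : 1 < s.re) :
    LSeriesSummable (FA N cstar χ ·) s := by
  refine LSeriesSummable_of_bounded_of_one_lt_re (m := 1) (fun n _ => ?_) hs
  rw [FA_apply]
  split
  · exact DirichletCharacter.norm_le_one χ _
  · simp

lemma sumM {N cstar : ℕ} (χ : DirichletCharacter ℂ cstar) {s : ℂ} (hs : 1 < s.re) :
    LSeriesSummable (MA N cstar χ ·) s := by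
  refine LSeriesSummable_of_bounded_of_one_lt_re (m := 1) (fun n _ => ?_) hs
  rw [MA_apply]
  split
  · refine le_trans (norm_mul_le _ _) ?_
    have h1 : ‖((ArithmeticFunction.moebius n : ℤ) : ℂ)‖ ≤ 1 := by
      by_cases hsq : Squarefree n
      · rw [ArithmeticFunction.moebius_apply_of_squarefree hsq]
        push_cast
        rw [norm_pow, norm_neg, norm_one, one_pow]
      · rw [ArithmeticFunction.moebius_eq_zero_of_not_squarefree hsq]
        simp
    calc ‖((ArithmeticFunction.moebius n : ℤ) : ℂ)‖ * ‖χ ((n : ℕ) : ZMod cstar)‖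
        ≤ 1 * 1 := mul_le_mul h1 (DirichletCharacter.norm_le_one χ _) (norm_nonneg _) zero_le_one
      _ = 1 := by norm_num
  · simp

lemma sumH {N cstar : ℕ} (χ : DirichletCharacter ℂ cstar) (m : ℕ) (hm : m ≠ 0) {s : ℂ} (hs : 1 < s.re) :
    LSeriesSummable (HA N cstar χ m ·) s := by
  refine LSeriesSummable_of_bounded_of_one_lt_re (m := (m : ℝ) * ‖tau χ‖) (fun n hn => ?_) hs
  rw [HA_apply]
  split
  · next h =>
    obtain ⟨-, hdvd, -⟩ := h
    have hnm : n ≤ m := Nat.le_of_dvd (Nat.pos_of_ne_zero hm) hdvd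
    refine le_trans (norm_mul_le _ _) ?_
    refine le_trans (mul_le_mul_of_nonneg_left (norm_mul_le _ _) (norm_nonneg _)) ?_
    calc ‖(n : ℂ)‖ * (‖tau χ‖ * ‖conjChar χ (((m / n : ℕ)) : ZMod cstar)‖)
        ≤ (m : ℝ) * (‖tau χ‖ * 1) := by
          refine mul_le_mul ?_ ?_ (by positivity) (by positivity)
          · rw [Complex.norm_natCast]; exact_mod_cast hnm
          · exact mul_le_mul_of_nonneg_left (DirichletCharacter.norm_le_one _ _) (norm_nonneg _)
      _ = (m : ℝ) * ‖tau χ‖ := by ring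
  · rw [norm_zero]
    positivity

lemma hGA {N cstar : ℕ} [NeZero cstar] {χ : DirichletCharacter ℂ cstar}
    (hprim : χ.IsPrimitive) (m : ℕ) :
    GA N cstar χ m = MA N cstar χ * HA N cstar χ m := by
  rw [← hFG hprim, ← mul_assoc, hMF, one_mul]

lemma sumG {N cstar : ℕ} [NeZero cstar] {χ : DirichletCharacter ℂ cstar}
    (hprim : χ.IsPrimitive) (m : ℕ) (hm : m ≠ 0) {s : ℂ} (hs : 1 < s.re) :
    LSeriesSummable (GA N cstar χ m ·) s := by
  have h := ArithmeticFunction.LSeriesSummable_mul (f := MA N cstar χ) (g := HA N cstar χ m)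
    (sumM χ hs) (sumH χ m hm hs)
  rw [← hGA hprim] at h
  exact h

lemma hHval {N cstar : ℕ} (χ : DirichletCharacter ℂ cstar) (m : ℕ) (hm : m ≠ 0) (s : ℂ) :
    LSeries (HA N cstar χ m ·) s
      = tau χ * (m : ℂ) ^ ((1 : ℂ) - s) * sigmaN N (conjChar χ) (s - 1) m := by
  rw [LSeries]
  rw [tsum_eq_sum (s := m.divisors.filter (fun d => Nat.Coprime d N)) ?_]
  · rw [sigmaN, Finset.mul_sum]
    refine Finset.sum_congr rfl fun d hd => ?_
    obtain ⟨hd1, hd2⟩ := Finset.mem_filter.mp hd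
    obtain ⟨hdvd, -⟩ := Nat.mem_divisors.mp hd1
    have hd0 : d ≠ 0 := fun h => hm (by simpa [h] using hdvd)
    have hq0 : m / d ≠ 0 := by
      have := Nat.div_pos (Nat.le_of_dvd (Nat.pos_of_ne_zero hm) hdvd) (Nat.pos_of_ne_zero hd0)
      omega
    rw [LSeries.term_of_ne_zero hd0, HA_apply, if_pos ⟨hd0, hdvd, hd2⟩]
    have ha : (d : ℂ) ≠ 0 := Nat.cast_ne_zero.mpr hd0
    have hb : ((m / d : ℕ) : ℂ) ≠ 0 := Nat.cast_ne_zero.mpr hq0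
    have h3 : (m : ℂ) ^ ((1 : ℂ) - s)
        = (d : ℂ) ^ ((1 : ℂ) - s) * ((m / d : ℕ) : ℂ) ^ ((1 : ℂ) - s) := by
      have hmd : (m : ℂ) = (d : ℂ) * ((m / d : ℕ) : ℂ) := by
        rw [← Nat.cast_mul, Nat.mul_div_cancel' hdvd]
      have := Complex.mul_cpow_ofReal_nonneg (a := (d : ℝ)) (b := ((m / d : ℕ) : ℝ))
        (by positivity) (by positivity) ((1 : ℂ) - s)
      push_cast at this ⊢
      rw [hmd]
      push_cast
      exact this
    have h2 : ((m / d : ℕ) : ℂ) ^ (s - 1) = (((m / d : ℕ) : ℂ) ^ ((1 : ℂ) - s))⁻¹ := by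
      rw [← Complex.cpow_neg, neg_sub]
    have h1 : (d : ℂ) ^ ((1 : ℂ) - s) = (d : ℂ) / (d : ℂ) ^ s := by
      rw [Complex.cpow_sub _ _ ha, Complex.cpow_one]
    have hbne : ((m / d : ℕ) : ℂ) ^ ((1 : ℂ) - s) ≠ 0 := by
      intro h
      exact hb ((Complex.cpow_eq_zero_iff _ _).mp h).1
    rw [h3, h2]
    have hc : ((m / d : ℕ) : ℂ) ^ ((1:ℂ) - s) * (((m / d : ℕ) : ℂ) ^ ((1:ℂ) - s))⁻¹ = 1 :=
      mul_inv_cancel₀ hbne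
    linear_combination (-(tau χ * conjChar χ (((m / d : ℕ)) : ZMod cstar) *
        ((m / d : ℕ) : ℂ) ^ ((1:ℂ) - s) * (((m / d : ℕ) : ℂ) ^ ((1:ℂ) - s))⁻¹)) * h1
      + (-((d:ℂ) * tau χ * conjChar χ (((m / d : ℕ)) : ZMod cstar) / (d:ℂ) ^ s)) * hc
  · intro n hn
    rcases eq_or_ne n 0 with rfl | hn0
    · exact LSeries.term_zero _ _
    rw [LSeries.term_of_ne_zero hn0, HA_apply]
    rw [if_neg ?_, zero_div]
    rintro ⟨-, hdvd, hcop⟩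
    exact hn (Finset.mem_filter.mpr ⟨Nat.mem_divisors.mpr ⟨hdvd, hm⟩, hcop⟩)

end St2

/-- Lemma on nonprimitive Gauss sums: for `Re(s) > 1` the series
`I^{(N)}(s,χ*,c*,m) = ∑_{ℓ ≥ 1, (ℓ,N)=1} g(χ*, ℓ c*, m) ℓ^{-s}` converges and equals
`τ(χ*) m^{1-s} σ^{(N)}_{s-1}(m, conj χ*) L^{(N)}(s, χ*)⁻¹`. -/
theorem statement_2 (N : ℕ) (hN : 0 < N) (cstar : ℕ) (hcs : 0 < cstar)
    (χ : DirichletCharacter ℂ cstar) (hprim : χ.IsPrimitive) (hcop : Nat.Coprime cstar N)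
    (m : ℕ) (hm : 0 < m) (s : ℂ) (hs : 1 < s.re) :
    Summable (fun ℓ : ℕ => if Nat.Coprime (ℓ + 1) N then
        gSum χ ((ℓ + 1) * cstar) (m : ℤ) * ((ℓ + 1 : ℕ) : ℂ) ^ (-s) else 0) ∧
    tau χ * (m : ℂ) ^ (1 - s) * sigmaN N (conjChar χ) (s - 1) m * (LN N χ s)⁻¹ =
      ∑' ℓ : ℕ, if Nat.Coprime (ℓ + 1) N then
        gSum χ ((ℓ + 1) * cstar) (m : ℤ) * ((ℓ + 1 : ℕ) : ℂ) ^ (-s) else 0 := by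
  have hcs' : cstar ≠ 0 := hcs.ne'
  haveI : NeZero cstar := ⟨hcs'⟩
  have hm' : m ≠ 0 := hm.ne'
  have sF := St2.sumF (N := N) χ hs
  have sG := St2.sumG (N := N) hprim m hm' hs
  have sM := St2.sumM (N := N) χ hs
  have hfun : (fun ℓ : ℕ => if Nat.Coprime (ℓ + 1) N then
      gSum χ ((ℓ + 1) * cstar) (m : ℤ) * ((ℓ + 1 : ℕ) : ℂ) ^ (-s) else 0)
      = fun ℓ : ℕ => LSeries.term (St2.GA N cstar χ m ·) s (ℓ + 1) := by
    funext ℓ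
    rw [LSeries.term_of_ne_zero (Nat.succ_ne_zero ℓ), St2.GA_apply]
    by_cases hcop : Nat.Coprime (ℓ + 1) N
    · rw [if_pos hcop, if_pos ⟨Nat.succ_ne_zero ℓ, hcop⟩, Complex.cpow_neg, div_eq_mul_inv]
    · rw [if_neg hcop, if_neg (by tauto), zero_div]
  constructor
  · rw [hfun]
    exact (summable_nat_add_iff 1).mpr sG
  have hIs : (∑' ℓ : ℕ, if Nat.Coprime (ℓ + 1) N then
      gSum χ ((ℓ + 1) * cstar) (m : ℤ) * ((ℓ + 1 : ℕ) : ℂ) ^ (-s) else 0)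
      = LSeries (St2.GA N cstar χ m ·) s := by
    rw [hfun, LSeries, Summable.tsum_eq_zero_add sG, LSeries.term_zero, zero_add]
  have hLN : LN N χ s = LSeries (St2.FA N cstar χ ·) s := by
    rw [LSeries, Summable.tsum_eq_zero_add sF, LSeries.term_zero, zero_add, LN]
    refine tsum_congr fun k => ?_
    rw [LSeries.term_of_ne_zero (Nat.succ_ne_zero k), St2.FA_apply]
    by_cases hcop : Nat.Coprime (k + 1) N
    · rw [if_pos hcop, if_pos ⟨Nat.succ_ne_zero k, hcop⟩, Complex.cpow_neg, div_eq_mul_inv]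
    · rw [if_neg hcop, if_neg (by tauto), zero_div]
  have e1 : LSeries (St2.HA N cstar χ m ·) s
      = LSeries (St2.FA N cstar χ ·) s * LSeries (St2.GA N cstar χ m ·) s := by
    rw [← St2.hFG hprim m]
    exact ArithmeticFunction.LSeries_mul' sF sG
  have e2 : LSeries (St2.MA N cstar χ ·) s * LSeries (St2.FA N cstar χ ·) s = 1 := by
    have h := ArithmeticFunction.LSeries_mul' (f := St2.MA N cstar χ) (g := St2.FA N cstar χ) sM sF
    rw [St2.hMF χ, ArithmeticFunction.one_eq_delta, LSeries_delta] at h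
    rw [← h]
    rfl
  have hF0 : LSeries (St2.FA N cstar χ ·) s ≠ 0 := right_ne_zero_of_mul_eq_one e2
  have hH := St2.hHval (N := N) χ m hm' s
  rw [hIs, hLN, ← hH, e1, mul_comm (LSeries (St2.FA N cstar χ ·) s), mul_assoc,
    mul_inv_cancel₀ hF0, mul_one]


end
end

section
/- Let N be a positive integer, ψ a Dirichlet character modulo N, χ* any Dirichlet character, and s ∈ ℂ. Let h be any complex-valued function on pairs of positive integers, and define 𝐡(q,m) = ∑_{d₂ | q} ∑_{d₁ℓ = m} ψ(d₂)·χ*(d₁d₂)·d₂^{−s}·h(qd₁/d₂, ℓ) for all positive integers q, m. Then the Möbius inversion formula h(q,m) = ∑_{e₀ | m} ∑_{e₁ | qe₀} μ(e₀)·μ(e₁)·χ*(e₀e₁)·ψ(e₁)·e₁^{−s}·𝐡(qe₀/e₁, m/e₀) holds for all positive integers q, m. -/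
open Complex
open scoped Classical

noncomputable section

private lemma musum (n : ℕ) (hn : n ≠ 0) :
    (∑ d ∈ n.divisors, ((ArithmeticFunction.moebius d : ℤ) : ℂ)) = if n = 1 then 1 else 0 := by
  have h1 := congrArg (fun f : ArithmeticFunction ℂ => f n)
    (ArithmeticFunction.coe_moebius_mul_coe_zeta (R := ℂ))
  simp only [ArithmeticFunction.coe_mul_zeta_apply, ArithmeticFunction.one_apply,
    ArithmeticFunction.intCoe_apply] at h1
  exact h1

private lemma sum_div_swap (n : ℕ) (hn : n ≠ 0) (f : ℕ → ℕ → ℂ) :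
    ∑ e ∈ n.divisors, ∑ d ∈ (n / e).divisors, f e d
      = ∑ g ∈ n.divisors, ∑ e ∈ g.divisors, f e (g / e) := by
  rw [Finset.sum_sigma', Finset.sum_sigma']
  refine Finset.sum_nbij' (fun p => ⟨p.1 * p.2, p.1⟩) (fun p => ⟨p.2, p.1 / p.2⟩) ?_ ?_ ?_ ?_ ?_
  · rintro ⟨e, d⟩ hp
    simp only [Finset.mem_sigma, Nat.mem_divisors] at hp ⊢
    obtain ⟨⟨hen, -⟩, hd, -⟩ := hp
    have hed : e * d ∣ n := (Nat.dvd_div_iff_mul_dvd hen).mp hd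
    exact ⟨⟨hed, hn⟩, ⟨dvd_mul_right e d, ne_zero_of_dvd_ne_zero hn hed⟩⟩
  · rintro ⟨g, e⟩ hp
    simp only [Finset.mem_sigma, Nat.mem_divisors] at hp ⊢
    obtain ⟨⟨hgn, -⟩, heg, hg0⟩ := hp
    have he0 : e ≠ 0 := by
      rintro rfl
      exact hg0 (Nat.eq_zero_of_zero_dvd heg)
    refine ⟨⟨heg.trans hgn, hn⟩, ?_, ?_⟩
    · rw [Nat.dvd_div_iff_mul_dvd (heg.trans hgn), Nat.mul_div_cancel' heg]
      exact hgn
    · exact (Nat.div_pos (Nat.le_of_dvd (Nat.pos_of_ne_zero hn) (heg.trans hgn))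
        (Nat.pos_of_ne_zero he0)).ne'
  · rintro ⟨e, d⟩ hp
    simp only [Finset.mem_sigma] at hp
    have he0 : 0 < e := Nat.pos_of_mem_divisors hp.1
    simp only [Nat.mul_div_cancel_left _ he0]
  · rintro ⟨g, e⟩ hp
    simp only [Finset.mem_sigma] at hp
    have heg : e ∣ g := (Nat.mem_divisors.mp hp.2).1
    simp only [Nat.mul_div_cancel' heg]
  · rintro ⟨e, d⟩ hp
    simp only [Finset.mem_sigma] at hp
    have he0 : 0 < e := Nat.pos_of_mem_divisors hp.1
    simp only [Nat.mul_div_cancel_left _ he0]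

private lemma key_sum (n : ℕ) (hn : n ≠ 0) (F : ℕ → ℂ) :
    ∑ e ∈ n.divisors, ∑ d ∈ (n / e).divisors,
      ((ArithmeticFunction.moebius e : ℤ) : ℂ) * F (e * d) = F 1 := by
  rw [sum_div_swap n hn]
  have hcongr : ∀ g ∈ n.divisors,
      (∑ e ∈ g.divisors, ((ArithmeticFunction.moebius e : ℤ) : ℂ) * F (e * (g / e)))
        = (if g = 1 then 1 else 0) * F g := by
    intro g hg
    have hg0 : g ≠ 0 := (Nat.pos_of_mem_divisors hg).ne'
    rw [← musum g hg0, Finset.sum_mul]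
    refine Finset.sum_congr rfl fun e he => ?_
    rw [Nat.mul_div_cancel' (Nat.mem_divisors.mp he).1]
  rw [Finset.sum_congr rfl hcongr,
    Finset.sum_eq_single 1 (fun g _ hne => by simp [hne])
      (fun h1 => absurd (Nat.one_mem_divisors.mpr hn) h1)]
  simp

/-- Möbius inversion: if
`𝐡(q,m) = ∑_{d₂ ∣ q} ∑_{d₁ℓ = m} ψ(d₂) χ*(d₁d₂) d₂^{-s} h(qd₁/d₂, ℓ)`, then
`h(q,m) = ∑_{e₀ ∣ m} ∑_{e₁ ∣ qe₀} μ(e₀) μ(e₁) χ*(e₀e₁) ψ(e₁) e₁^{-s} 𝐡(qe₀/e₁, m/e₀)`. -/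
theorem statement_3 (N M : ℕ) (hN : 0 < N) (ψ : DirichletCharacter ℂ N)
    (χ : DirichletCharacter ℂ M) (s : ℂ) (h bh : ℕ → ℕ → ℂ)
    (hbh : ∀ q m : ℕ, 0 < q → 0 < m → bh q m =
      ∑ d₂ ∈ q.divisors, ∑ d₁ ∈ m.divisors,
        ψ ((d₂ : ℕ) : ZMod N) * χ ((d₁ * d₂ : ℕ) : ZMod M) * (d₂ : ℂ) ^ (-s) *
          h (q * d₁ / d₂) (m / d₁)) :
    ∀ q m : ℕ, 0 < q → 0 < m →
      h q m = ∑ e₀ ∈ m.divisors, ∑ e₁ ∈ (q * e₀).divisors,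
        ((ArithmeticFunction.moebius e₀ : ℤ) : ℂ) * ((ArithmeticFunction.moebius e₁ : ℤ) : ℂ) *
          χ ((e₀ * e₁ : ℕ) : ZMod M) * ψ ((e₁ : ℕ) : ZMod N) * (e₁ : ℂ) ^ (-s) *
          bh (q * e₀ / e₁) (m / e₀) := by
  intro q m hq hm
  have hq0 : q ≠ 0 := hq.ne'
  have hm0 : m ≠ 0 := hm.ne'
  symm
  have step1 : ∀ e₀ ∈ m.divisors,
      (∑ e₁ ∈ (q * e₀).divisors,
        ((ArithmeticFunction.moebius e₀ : ℤ) : ℂ) * ((ArithmeticFunction.moebius e₁ : ℤ) : ℂ) *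
          χ ((e₀ * e₁ : ℕ) : ZMod M) * ψ ((e₁ : ℕ) : ZMod N) * (e₁ : ℂ) ^ (-s) *
          bh (q * e₀ / e₁) (m / e₀))
      = ∑ d₁ ∈ (m / e₀).divisors, ((ArithmeticFunction.moebius e₀ : ℤ) : ℂ) *
          (χ ((e₀ * d₁ : ℕ) : ZMod M) * h (q * (e₀ * d₁)) (m / (e₀ * d₁))) := by
    intro e₀ he₀
    have he₀p : 0 < e₀ := Nat.pos_of_mem_divisors he₀
    have he₀m : e₀ ∣ m := (Nat.mem_divisors.mp he₀).1
    have hqe₀ : q * e₀ ≠ 0 := Nat.mul_ne_zero hq0 he₀p.ne'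
    calc
      (∑ e₁ ∈ (q * e₀).divisors,
          ((ArithmeticFunction.moebius e₀ : ℤ) : ℂ) * ((ArithmeticFunction.moebius e₁ : ℤ) : ℂ) *
            χ ((e₀ * e₁ : ℕ) : ZMod M) * ψ ((e₁ : ℕ) : ZMod N) * (e₁ : ℂ) ^ (-s) *
            bh (q * e₀ / e₁) (m / e₀))
        = ∑ e₁ ∈ (q * e₀).divisors, ∑ d₂ ∈ (q * e₀ / e₁).divisors, ∑ d₁ ∈ (m / e₀).divisors,
            ((ArithmeticFunction.moebius e₀ : ℤ) : ℂ) * ((ArithmeticFunction.moebius e₁ : ℤ) : ℂ) *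
              χ ((e₀ * e₁ : ℕ) : ZMod M) * ψ ((e₁ : ℕ) : ZMod N) * (e₁ : ℂ) ^ (-s) *
              (ψ ((d₂ : ℕ) : ZMod N) * χ ((d₁ * d₂ : ℕ) : ZMod M) * (d₂ : ℂ) ^ (-s) *
                h (q * e₀ / e₁ * d₁ / d₂) (m / e₀ / d₁)) := by
          refine Finset.sum_congr rfl fun e₁ he₁ => ?_
          have he₁p : 0 < e₁ := Nat.pos_of_mem_divisors he₁
          have he₁d : e₁ ∣ q * e₀ := (Nat.mem_divisors.mp he₁).1
          rw [hbh _ _ (Nat.div_pos (Nat.le_of_dvd (Nat.pos_of_ne_zero hqe₀) he₁d) he₁p)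
            (Nat.div_pos (Nat.le_of_dvd hm he₀m) he₀p), Finset.mul_sum]
          exact Finset.sum_congr rfl fun d₂ _ => Finset.mul_sum _ _ _
      _ = ∑ d₁ ∈ (m / e₀).divisors, ∑ e₁ ∈ (q * e₀).divisors, ∑ d₂ ∈ (q * e₀ / e₁).divisors,
            ((ArithmeticFunction.moebius e₀ : ℤ) : ℂ) * ((ArithmeticFunction.moebius e₁ : ℤ) : ℂ) *
              χ ((e₀ * e₁ : ℕ) : ZMod M) * ψ ((e₁ : ℕ) : ZMod N) * (e₁ : ℂ) ^ (-s) *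
              (ψ ((d₂ : ℕ) : ZMod N) * χ ((d₁ * d₂ : ℕ) : ZMod M) * (d₂ : ℂ) ^ (-s) *
                h (q * e₀ / e₁ * d₁ / d₂) (m / e₀ / d₁)) := by
          rw [Finset.sum_congr rfl fun e₁ (_ : e₁ ∈ (q * e₀).divisors) => Finset.sum_comm]
          exact Finset.sum_comm
      _ = ∑ d₁ ∈ (m / e₀).divisors, ((ArithmeticFunction.moebius e₀ : ℤ) : ℂ) *
            (χ ((e₀ * d₁ : ℕ) : ZMod M) * h (q * (e₀ * d₁)) (m / (e₀ * d₁))) := by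
          refine Finset.sum_congr rfl fun d₁ hd₁ => ?_
          have hpoint : ∀ e₁ ∈ (q * e₀).divisors, ∀ d₂ ∈ (q * e₀ / e₁).divisors,
              ((ArithmeticFunction.moebius e₀ : ℤ) : ℂ) *
                ((ArithmeticFunction.moebius e₁ : ℤ) : ℂ) *
                χ ((e₀ * e₁ : ℕ) : ZMod M) * ψ ((e₁ : ℕ) : ZMod N) * (e₁ : ℂ) ^ (-s) *
                (ψ ((d₂ : ℕ) : ZMod N) * χ ((d₁ * d₂ : ℕ) : ZMod M) * (d₂ : ℂ) ^ (-s) *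
                  h (q * e₀ / e₁ * d₁ / d₂) (m / e₀ / d₁))
              = ((ArithmeticFunction.moebius e₁ : ℤ) : ℂ) *
                  (((ArithmeticFunction.moebius e₀ : ℤ) : ℂ) *
                    (χ ((e₀ * d₁ : ℕ) : ZMod M) * χ ((e₁ * d₂ : ℕ) : ZMod M)) *
                    ψ ((e₁ * d₂ : ℕ) : ZMod N) * ((e₁ * d₂ : ℕ) : ℂ) ^ (-s) *
                    h (q * e₀ * d₁ / (e₁ * d₂)) (m / e₀ / d₁)) := by
            intro e₁ he₁ d₂ hd₂
            have he₁p : 0 < e₁ := Nat.pos_of_mem_divisors he₁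
            have he₁d : e₁ ∣ q * e₀ := (Nat.mem_divisors.mp he₁).1
            have harg : q * e₀ / e₁ * d₁ / d₂ = q * e₀ * d₁ / (e₁ * d₂) := by
              obtain ⟨k, hk⟩ := he₁d
              rw [hk, Nat.mul_div_cancel_left k he₁p, mul_assoc,
                Nat.mul_div_mul_left (k * d₁) d₂ he₁p]
            simp only [Nat.cast_mul, map_mul, Complex.natCast_mul_natCast_cpow, harg]
            ring
          rw [Finset.sum_congr rfl fun e₁ he₁ => Finset.sum_congr rfl (hpoint e₁ he₁),
            key_sum (q * e₀) hqe₀ (fun g => ((ArithmeticFunction.moebius e₀ : ℤ) : ℂ) *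
              (χ ((e₀ * d₁ : ℕ) : ZMod M) * χ ((g : ℕ) : ZMod M)) *
              ψ ((g : ℕ) : ZMod N) * ((g : ℕ) : ℂ) ^ (-s) * h (q * e₀ * d₁ / g) (m / e₀ / d₁))]
          simp only [Nat.cast_one, map_one, mul_one, Complex.one_cpow, Nat.div_one,
            Nat.div_div_eq_div_mul, mul_assoc]
  rw [Finset.sum_congr rfl step1,
    key_sum m hm0 (fun g => χ ((g : ℕ) : ZMod M) * h (q * g) (m / g))]
  simp

end
end

section
/- Let N, ψ, A, Ã be as in the context, with Ã satisfying its Hecke relation, A(q,n) = ψ(nq)·Ã(n,q) whenever (nq,N)=1, and the twisted functional-equation hypothesis in force. Let q be a positive integer with (q,N)=1 and χ* a primitive Dirichlet character modulo c* with (c*,N)=1, and let G_± denote G₊ if χ*(−1)=1 and G₋ if χ*(−1)=−1. Then, for Re(w) sufficiently large, the double Dirichlet series Z(s,w) = (∑_{n≥1,(n,N)=1} A(q,n)n^{−(2w−s)}) · L(s,F×χ*) / L^{(N)}(2w−2s+1, conj(χ*)) satisfies, for −Re(s) sufficiently large, Z(s,w) = G_±(s)·ψ(c*)·χ*(N)·c*^{−3s}·τ(χ*)³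 · ∑_{n≥1,(n,N)=1} ∑_{d₁ | q} ∑_{d₀ ≥ 1} Ã(nd₁, qd₀/d₁)·ψ(nq)·conj(χ*)(d₀d₁)·n^{−(2w−s)}·(d₀d₁)^{−(1−s)}, where L(s,F×χ*) denotes the holomorphic continuation of ∑_n A(1,n)χ*(n)n^{−s}. -/
open Complex
open scoped Classical

noncomputable section

namespace Stmt6Aux

open Finset

/-! ### Generic helper lemmas -/

private lemma natMulCpow (x y : ℕ) (z : ℂ) :
    (((x * y : ℕ) : ℂ)) ^ z = ((x : ℕ) : ℂ) ^ z * ((y : ℕ) : ℂ) ^ z := by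
  rw [Nat.cast_mul]
  exact Complex.natCast_mul_natCast_cpow x y z

private lemma norm_cpow_nat (k : ℕ) (z : ℂ) :
    ‖((k + 1 : ℕ) : ℂ) ^ (-z)‖ = ((k : ℝ) + 1) ^ (-z.re) := by
  rw [Complex.norm_natCast_cpow_of_pos (Nat.succ_pos k), Complex.neg_re]
  push_cast
  ring_nf

private lemma summable_pow_shift {p : ℝ} (hp : p < -1) :
    Summable (fun n : ℕ => ((n : ℝ) + 1) ^ p) := by
  have h := (Real.summable_nat_rpow (p := p)).mpr hp
  have h2 := h.comp_injective (add_left_injective 1)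
  have e : ((fun n : ℕ => (n : ℝ) ^ p) ∘ fun x : ℕ => x + 1) = fun n : ℕ => ((n : ℝ) + 1) ^ p := by
    funext n
    simp [Function.comp]
  rwa [e] at h2

private lemma summable_pow_mul {Cc σ : ℝ} (h : Cc + 1 < σ) :
    Summable (fun n : ℕ => ((n : ℝ) + 1) ^ Cc * ((n : ℝ) + 1) ^ (-σ)) := by
  have e : ∀ n : ℕ, ((n : ℝ) + 1) ^ Cc * ((n : ℝ) + 1) ^ (-σ) = ((n : ℝ) + 1) ^ (Cc - σ) := by
    intro n
    rw [← Real.rpow_add (by positivity)]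
    ring_nf
  simp only [e]
  exact summable_pow_shift (by linarith)

private lemma pred_eq_imp {x y : ℕ} (hx : 0 < x) (hy : 0 < y) (h : x - 1 = y - 1) : x = y := by
  omega

private lemma telescope_hasSum :
    HasSum (fun l : ℕ => 1 / ((l : ℝ) + 1) - 1 / ((l : ℝ) + 2)) 1 := by
  have key : ∀ n : ℕ, ∑ i ∈ Finset.range n, (1 / ((i : ℝ) + 1) - 1 / ((i : ℝ) + 2))
      = 1 - 1 / ((n : ℝ) + 1) := by
    intro n
    calc ∑ i ∈ Finset.range n, (1 / ((i : ℝ) + 1) - 1 / ((i : ℝ) + 2))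
        = ∑ i ∈ Finset.range n,
            ((fun j : ℕ => 1 / ((j : ℝ) + 1)) i - (fun j : ℕ => 1 / ((j : ℝ) + 1)) (i + 1)) := by
          refine Finset.sum_congr rfl fun i _ => ?_
          push_cast
          ring
      _ = (fun j : ℕ => 1 / ((j : ℝ) + 1)) 0 - (fun j : ℕ => 1 / ((j : ℝ) + 1)) n :=
          Finset.sum_range_sub' _ n
      _ = 1 - 1 / ((n : ℝ) + 1) := by norm_num
  have hnn : ∀ i : ℕ, 0 ≤ 1 / ((i : ℝ) + 1) - 1 / ((i : ℝ) + 2) := by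
    intro i
    have h0 : (0 : ℝ) ≤ (i : ℝ) := Nat.cast_nonneg i
    have : 1 / ((i : ℝ) + 2) ≤ 1 / ((i : ℝ) + 1) :=
      one_div_le_one_div_of_le (by linarith) (by linarith)
    linarith
  rw [hasSum_iff_tendsto_nat_of_nonneg hnn]
  simp only [key]
  have h : Filter.Tendsto (fun n : ℕ => 1 / ((n : ℝ) + 1)) Filter.atTop (nhds 0) :=
    tendsto_one_div_add_atTop_nhds_zero_nat
  simpa using tendsto_const_nhds.sub h

end Stmt6Aux
namespace Stmt6Aux

open Finset

private lemma char_nonunit_zero {N : ℕ} (hN : 0 < N) (ψ : DirichletCharacter ℂ N) {k : ℕ}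
    (hk : ¬ Nat.Coprime k N) : ψ ((k : ℕ) : ZMod N) = 0 := by
  haveI : NeZero N := ⟨hN.ne'⟩
  exact ψ.map_nonunit (fun h => hk ((ZMod.isUnit_iff_coprime k N).mp h))

private lemma char_mul_conj_eq_one {N : ℕ} (hN : 0 < N) (ψ : DirichletCharacter ℂ N) {k : ℕ}
    (hk : Nat.Coprime k N) :
    ψ ((k : ℕ) : ZMod N) * conjChar ψ ((k : ℕ) : ZMod N) = 1 := by
  haveI : NeZero N := ⟨hN.ne'⟩
  have hu : IsUnit ((k : ℕ) : ZMod N) := (ZMod.isUnit_iff_coprime k N).mpr hk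
  have h1 : ‖ψ ((k : ℕ) : ZMod N)‖ = 1 := by
    rw [← hu.unit_spec]
    exact DirichletCharacter.unit_norm_eq_one ψ hu.unit
  have h2 : Complex.normSq (ψ ((k : ℕ) : ZMod N)) = 1 := by
    rw [Complex.normSq_eq_norm_sq, h1, one_pow]
  have h3 : conjChar ψ ((k : ℕ) : ZMod N)
      = (starRingEnd ℂ) (ψ ((k : ℕ) : ZMod N)) := rfl
  rw [h3, Complex.mul_conj, h2, Complex.ofReal_one]

end Stmt6Aux
namespace Stmt6Aux

open Finset

section Defs

variable (N : ℕ) (ψ : DirichletCharacter ℂ N) (A At : ℕ → ℕ → ℂ) (q cs : ℕ)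
  (χ : DirichletCharacter ℂ cs) (u v : ℂ)

/-- term of the `A(q,n)` Dirichlet series -/
private noncomputable def fA (n : ℕ) : ℂ :=
  if Nat.Coprime (n + 1) N then A q (n + 1) * ((n + 1 : ℕ) : ℂ) ^ (-v) else 0

/-- term of the `L₂` series at `u` -/
private noncomputable def fB (m : ℕ) : ℂ :=
  At 1 (m + 1) * conjChar χ ((m + 1 : ℕ) : ZMod cs) * ((m + 1 : ℕ) : ℂ) ^ (-u)

/-- term of `L^{(N)}(z, conj χ)` -/
private noncomputable def fL (z : ℂ) (l : ℕ) : ℂ :=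
  if Nat.Coprime (l + 1) N then
    conjChar χ ((l + 1 : ℕ) : ZMod cs) * ((l + 1 : ℕ) : ℂ) ^ (-z) else 0

/-- inner term of the right-hand side -/
private noncomputable def rT (n d₁ d₀ : ℕ) : ℂ :=
  At ((n + 1) * d₁) (q * (d₀ + 1) / d₁) * ψ (((n + 1) * q : ℕ) : ZMod N) *
    conjChar χ (((d₀ + 1) * d₁ : ℕ) : ZMod cs) *
    ((n + 1 : ℕ) : ℂ) ^ (-v) *
    (((d₀ + 1) * d₁ : ℕ) : ℂ) ^ (-u)

/-- term of the right-hand-side outer series -/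
private noncomputable def fR (n : ℕ) : ℂ :=
  if Nat.Coprime (n + 1) N then
    ∑ d₁ ∈ q.divisors, ∑' d₀ : ℕ, rT N ψ At q cs χ u v n d₁ d₀
  else 0

/-- master 4-variable function: coordinates `(n, b, a, c)` -/
private noncomputable def FF (p : ℕ × ℕ × ℕ × ℕ) : ℂ :=
  (if (p.2.1 + 1) ∣ q ∧ Nat.Coprime (p.1 + 1) N then
      rT N ψ At q cs χ u v p.1 (p.2.1 + 1) p.2.2.1
    else 0) * fL N cs χ (u + v) p.2.2.2

/-- 5-variable function: coordinates `((n, m), (t₁, t₂₁, t₂₂))` -/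
private noncomputable def gg (x : (ℕ × ℕ) × ℕ × ℕ × ℕ) : ℂ :=
  if x.2.1 * (x.2.2.1 * x.2.2.2) = x.1.2 + 1 ∧ x.2.2.1 ∣ q ∧ x.2.2.2 ∣ (x.1.1 + 1)
      ∧ Nat.Coprime (x.1.1 + 1) N then
    (ψ (((x.1.1 + 1) * q : ℕ) : ZMod N) * ((x.1.1 + 1 : ℕ) : ℂ) ^ (-v) *
      conjChar χ ((x.1.2 + 1 : ℕ) : ZMod cs) * ((x.1.2 + 1 : ℕ) : ℂ) ^ (-u)) *
    (At (x.2.2.1 * (x.1.1 + 1) / x.2.2.2) (x.2.1 * q / x.2.2.1) *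
      conjChar ψ ((x.2.2.2 : ℕ) : ZMod N))
  else 0

end Defs

private def emb (p : ℕ × ℕ × ℕ × ℕ) : (ℕ × ℕ) × ℕ × ℕ × ℕ :=
  (((p.2.2.2 + 1) * (p.1 + 1) - 1, (p.2.2.1 + 1) * ((p.2.1 + 1) * (p.2.2.2 + 1)) - 1),
    (p.2.2.1 + 1, p.2.1 + 1, p.2.2.2 + 1))

private lemma emb_inj : Function.Injective emb := by
  rintro ⟨n, b, a, c⟩ ⟨n', b', a', c'⟩ h
  unfold emb at h
  simp only [Prod.mk.injEq] at h
  obtain ⟨⟨h1, h2⟩, h3, h4, h5⟩ := h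
  have ha : a = a' := by omega
  have hb : b = b' := by omega
  have hc : c = c' := by omega
  subst ha hb hc
  have e1 : (c + 1) * (n + 1) = (c + 1) * (n' + 1) :=
    pred_eq_imp (by positivity) (by positivity) h1
  have hn : n = n' := by
    have := Nat.eq_of_mul_eq_mul_left (Nat.succ_pos c) e1
    omega
  simp [hn]

end Stmt6Aux
namespace Stmt6Aux

open Finset

section PtLemmas

variable (N : ℕ) (ψ : DirichletCharacter ℂ N) (At : ℕ → ℕ → ℂ) (q cs : ℕ)
  (χ : DirichletCharacter ℂ cs) (u v : ℂ)

private lemma gg_not_range :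
    ∀ x, x ∉ Set.range emb → gg N ψ At q cs χ u v x = 0 := by
  rintro ⟨⟨n, m⟩, t1, t21, t22⟩ hx
  unfold gg
  split
  case isFalse => rfl
  case isTrue h =>
    exfalso
    apply hx
    obtain ⟨h1, h2, h3, h4⟩ := h
    simp only at h1 h2 h3
    obtain ⟨k, hk⟩ := h3
    have ht1 : t1 ≠ 0 := by
      intro h; rw [h, zero_mul] at h1; exact (Nat.succ_ne_zero m) h1.symm
    have ht21 : t21 ≠ 0 := by
      intro h; rw [h, zero_mul, mul_zero] at h1; exact (Nat.succ_ne_zero m) h1.symm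
    have ht22 : t22 ≠ 0 := by
      intro h; rw [h, mul_zero, mul_zero] at h1; exact (Nat.succ_ne_zero m) h1.symm
    have hk0 : k ≠ 0 := by
      intro h; rw [h, mul_zero] at hk; exact (Nat.succ_ne_zero n) hk
    refine ⟨(k - 1, t21 - 1, t1 - 1, t22 - 1), ?_⟩
    have e1 : t1 - 1 + 1 = t1 := by omega
    have e21 : t21 - 1 + 1 = t21 := by omega
    have e22 : t22 - 1 + 1 = t22 := by omega
    have ek : k - 1 + 1 = k := by omega
    simp only [emb, e1, e21, e22, ek]
    rw [← hk, h1]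
    simp

private lemma gg_emb (hN : 0 < N) (p : ℕ × ℕ × ℕ × ℕ) :
    gg N ψ At q cs χ u v (emb p) = FF N ψ At q cs χ u v p := by
  obtain ⟨n, b, a, c⟩ := p
  have hgen : ∀ x : ℕ, 0 < x → x - 1 + 1 = x := fun x hx => by omega
  have hc1 : (c + 1) * (n + 1) - 1 + 1 = (c + 1) * (n + 1) := hgen _ (by positivity)
  have hm1 : (a + 1) * ((b + 1) * (c + 1)) - 1 + 1 = (a + 1) * ((b + 1) * (c + 1)) :=
    hgen _ (by positivity)
  unfold gg emb FF fL
  rw [hc1, hm1]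
  by_cases hbq : (b + 1) ∣ q
  · by_cases hn : Nat.Coprime (n + 1) N
    · by_cases hc : Nat.Coprime (c + 1) N
      · have hcn : Nat.Coprime ((c + 1) * (n + 1)) N := Nat.Coprime.mul hc hn
        rw [if_pos ⟨rfl, hbq, dvd_mul_right _ _, hcn⟩, if_pos ⟨hbq, hn⟩, if_pos hc]
        unfold rT
        have hAt1 : (b + 1) * ((c + 1) * (n + 1)) / (c + 1) = (n + 1) * (b + 1) := by
          rw [show (b + 1) * ((c + 1) * (n + 1)) = (n + 1) * (b + 1) * (c + 1) by ring,
            Nat.mul_div_cancel _ (Nat.succ_pos c)]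
        have hAt2 : (a + 1) * q / (b + 1) = q * (a + 1) / (b + 1) := by rw [mul_comm]
        have hψm : ψ ((((c + 1) * (n + 1)) * q : ℕ) : ZMod N)
            = ψ ((c + 1 : ℕ) : ZMod N) * ψ (((n + 1) * q : ℕ) : ZMod N) := by
          rw [show ((c + 1) * (n + 1)) * q = (c + 1) * ((n + 1) * q) by ring, Nat.cast_mul,
            map_mul]
        have hχm : conjChar χ (((a + 1) * ((b + 1) * (c + 1)) : ℕ) : ZMod cs)
            = conjChar χ (((a + 1) * (b + 1) : ℕ) : ZMod cs)
              * conjChar χ ((c + 1 : ℕ) : ZMod cs) := by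
          rw [show (a + 1) * ((b + 1) * (c + 1)) = ((a + 1) * (b + 1)) * (c + 1) by ring,
            Nat.cast_mul, map_mul]
        have hsv : ((((c + 1) * (n + 1) : ℕ)) : ℂ) ^ (-v)
            = ((c + 1 : ℕ) : ℂ) ^ (-v) * ((n + 1 : ℕ) : ℂ) ^ (-v) := natMulCpow _ _ _
        have hsu : ((((a + 1) * ((b + 1) * (c + 1)) : ℕ)) : ℂ) ^ (-u)
            = (((a + 1) * (b + 1) : ℕ) : ℂ) ^ (-u) * ((c + 1 : ℕ) : ℂ) ^ (-u) := by
          rw [show (a + 1) * ((b + 1) * (c + 1)) = ((a + 1) * (b + 1)) * (c + 1) by ring]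
          exact natMulCpow _ _ _
        have hcc : ((c + 1 : ℕ) : ℂ) ^ (-(u + v))
            = ((c + 1 : ℕ) : ℂ) ^ (-v) * ((c + 1 : ℕ) : ℂ) ^ (-u) := by
          rw [show -(u + v) = -v + -u by ring]
          exact Complex.cpow_add _ _ (Nat.cast_ne_zero.mpr (Nat.succ_ne_zero c))
        have hone := char_mul_conj_eq_one hN ψ (k := c + 1) hc
        rw [hAt1, hAt2, hψm, hχm, hsv, hsu, hcc]
        linear_combination (At ((n + 1) * (b + 1)) (q * (a + 1) / (b + 1)) *
          ψ (((n + 1) * q : ℕ) : ZMod N) * conjChar χ (((a + 1) * (b + 1) : ℕ) : ZMod cs) *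
          ((n + 1 : ℕ) : ℂ) ^ (-v) * (((a + 1) * (b + 1) : ℕ) : ℂ) ^ (-u) *
          conjChar χ ((c + 1 : ℕ) : ZMod cs) * ((c + 1 : ℕ) : ℂ) ^ (-v) *
          ((c + 1 : ℕ) : ℂ) ^ (-u)) * hone
      · rw [if_neg (fun h => hc (Nat.coprime_mul_iff_left.mp h.2.2.2).1),
          if_pos ⟨hbq, hn⟩, if_neg hc, mul_zero]
    · rw [if_neg (fun h => hn (Nat.coprime_mul_iff_left.mp h.2.2.2).2),
        if_neg (fun (h : (b + 1) ∣ q ∧ Nat.Coprime (n + 1) N) => hn h.2), zero_mul]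
  · rw [if_neg (fun h => hbq h.2.1),
      if_neg (fun (h : (b + 1) ∣ q ∧ Nat.Coprime (n + 1) N) => hbq h.1), zero_mul]

end PtLemmas

end Stmt6Aux
namespace Stmt6Aux

open Finset

section Norms

variable (N : ℕ) (ψ : DirichletCharacter ℂ N) (A At : ℕ → ℕ → ℂ) (q cs : ℕ)
  (χ : DirichletCharacter ℂ cs) (u v : ℂ) (C K : ℝ)

private lemma norm_fL_le (z : ℂ) (l : ℕ) :
    ‖fL N cs χ z l‖ ≤ ((l : ℝ) + 1) ^ (-z.re) := by
  unfold fL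
  split
  · rw [norm_mul]
    calc ‖conjChar χ ((l + 1 : ℕ) : ZMod cs)‖ * ‖((l + 1 : ℕ) : ℂ) ^ (-z)‖
        ≤ 1 * ‖((l + 1 : ℕ) : ℂ) ^ (-z)‖ := by
          gcongr
          exact DirichletCharacter.norm_le_one _ _
      _ = ((l : ℝ) + 1) ^ (-z.re) := by rw [one_mul, norm_cpow_nat]
  · simp only [norm_zero]
    positivity

private lemma summable_norm_fL (z : ℂ) (hz : 1 < z.re) :
    Summable (fun l : ℕ => ‖fL N cs χ z l‖) :=
  Summable.of_nonneg_of_le (fun _ => norm_nonneg _) (norm_fL_le N cs χ z)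
    (summable_pow_shift (by linarith))

private lemma norm_fA_le (hK : 0 ≤ K)
    (hbd : ∀ m n : ℕ, 0 < m → 0 < n →
      ‖A m n‖ + ‖At m n‖ ≤ K * ((m * n : ℕ) : ℝ) ^ C)
    (hq : 0 < q) (n : ℕ) :
    ‖fA N A q v n‖ ≤ (K * (q : ℝ) ^ C) * (((n : ℝ) + 1) ^ C * ((n : ℝ) + 1) ^ (-v.re)) := by
  have hq0 : (0 : ℝ) ≤ (q : ℝ) := Nat.cast_nonneg q
  have hKq : 0 ≤ K * (q : ℝ) ^ C := mul_nonneg hK (by positivity)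
  unfold fA
  split
  · rw [norm_mul]
    have h1 : ‖A q (n + 1)‖ ≤ K * ((q : ℝ) * ((n : ℝ) + 1)) ^ C := by
      have h := hbd q (n + 1) hq (Nat.succ_pos n)
      have h' : ‖A q (n + 1)‖ ≤ K * ((q * (n + 1) : ℕ) : ℝ) ^ C :=
        le_trans (le_add_of_nonneg_right (norm_nonneg _)) h
      convert h' using 3
      push_cast
      ring
    calc ‖A q (n + 1)‖ * ‖((n + 1 : ℕ) : ℂ) ^ (-v)‖
        ≤ (K * ((q : ℝ) * ((n : ℝ) + 1)) ^ C) * (((n : ℝ) + 1) ^ (-v.re)) := by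
          rw [← norm_cpow_nat n v]
          exact mul_le_mul_of_nonneg_right h1 (norm_nonneg _)
      _ = (K * (q : ℝ) ^ C) * (((n : ℝ) + 1) ^ C * ((n : ℝ) + 1) ^ (-v.re)) := by
          rw [Real.mul_rpow hq0 (by positivity)]
          ring
  · simp only [norm_zero]
    exact mul_nonneg hKq (by positivity)

private lemma summable_norm_fA (hK : 0 ≤ K)
    (hbd : ∀ m n : ℕ, 0 < m → 0 < n →
      ‖A m n‖ + ‖At m n‖ ≤ K * ((m * n : ℕ) : ℝ) ^ C)
    (hq : 0 < q) (hv : C + 1 < v.re) :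
    Summable (fun n : ℕ => ‖fA N A q v n‖) :=
  Summable.of_nonneg_of_le (fun _ => norm_nonneg _) (norm_fA_le N A At q v C K hK hbd hq)
    ((summable_pow_mul hv).mul_left _)

private lemma norm_fB_le (hK : 0 ≤ K)
    (hbd : ∀ m n : ℕ, 0 < m → 0 < n →
      ‖A m n‖ + ‖At m n‖ ≤ K * ((m * n : ℕ) : ℝ) ^ C)
    (m : ℕ) :
    ‖fB At cs χ u m‖ ≤ K * (((m : ℝ) + 1) ^ C * ((m : ℝ) + 1) ^ (-u.re)) := by
  unfold fB
  have h1 : ‖At 1 (m + 1)‖ ≤ K * ((m : ℝ) + 1) ^ C := by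
    have h := hbd 1 (m + 1) one_pos (Nat.succ_pos m)
    have h' : ‖At 1 (m + 1)‖ ≤ K * ((1 * (m + 1) : ℕ) : ℝ) ^ C :=
      le_trans (le_add_of_nonneg_left (norm_nonneg _)) h
    convert h' using 3
    push_cast
    ring
  rw [norm_mul, norm_mul]
  calc ‖At 1 (m + 1)‖ * ‖conjChar χ ((m + 1 : ℕ) : ZMod cs)‖ * ‖((m + 1 : ℕ) : ℂ) ^ (-u)‖
      ≤ ‖At 1 (m + 1)‖ * 1 * (((m : ℝ) + 1) ^ (-u.re)) := by
        rw [norm_cpow_nat]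
        gcongr
        exact DirichletCharacter.norm_le_one _ _
    _ = ‖At 1 (m + 1)‖ * (((m : ℝ) + 1) ^ (-u.re)) := by ring
    _ ≤ (K * ((m : ℝ) + 1) ^ C) * (((m : ℝ) + 1) ^ (-u.re)) :=
        mul_le_mul_of_nonneg_right h1 (by positivity)
    _ = K * (((m : ℝ) + 1) ^ C * ((m : ℝ) + 1) ^ (-u.re)) := by ring

private lemma summable_norm_fB (hK : 0 ≤ K)
    (hbd : ∀ m n : ℕ, 0 < m → 0 < n →
      ‖A m n‖ + ‖At m n‖ ≤ K * ((m * n : ℕ) : ℝ) ^ C)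
    (hu : C + 1 < u.re) :
    Summable (fun m : ℕ => ‖fB At cs χ u m‖) :=
  Summable.of_nonneg_of_le (fun _ => norm_nonneg _) (norm_fB_le A At cs χ u C K hK hbd)
    ((summable_pow_mul hu).mul_left _)

/-- The dominating product function for `FF`. -/
private noncomputable def DD (p : ℕ × ℕ × ℕ × ℕ) : ℝ :=
  ((K * (q : ℝ) ^ C) * (((p.1 : ℝ) + 1) ^ C * ((p.1 : ℝ) + 1) ^ (-v.re))) *
    ((if (p.2.1 + 1) ∣ q then (1 : ℝ) else 0) *
      ((((p.2.2.1 : ℝ) + 1) ^ C * ((p.2.2.1 : ℝ) + 1) ^ (-u.re)) *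
        (((p.2.2.2 : ℝ) + 1) ^ (-(u + v).re))))

set_option maxHeartbeats 2000000 in
private lemma DD_summable (hK : 0 ≤ K) (hq : 0 < q)
    (hu : C + 1 < u.re) (hv : C + 1 < v.re) (huv : 1 < (u + v).re) :
    Summable (DD q u v C K) := by
  have S1 : Summable (fun n : ℕ =>
      (K * (q : ℝ) ^ C) * (((n : ℝ) + 1) ^ C * ((n : ℝ) + 1) ^ (-v.re))) :=
    (summable_pow_mul hv).mul_left _
  have S2 : Summable (fun b : ℕ => if (b + 1) ∣ q then (1 : ℝ) else 0) := by
    apply summable_of_ne_finset_zero (s := Finset.range q)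
    intro b hb
    rw [Finset.mem_range, not_lt] at hb
    rw [if_neg]
    intro hdvd
    have := Nat.le_of_dvd hq hdvd
    omega
  have S3 : Summable (fun a : ℕ => ((a : ℝ) + 1) ^ C * ((a : ℝ) + 1) ^ (-u.re)) :=
    summable_pow_mul hu
  have S4 : Summable (fun c : ℕ => ((c : ℝ) + 1) ^ (-(u + v).re)) :=
    summable_pow_shift (by linarith)
  have h34 : Summable (fun y : ℕ × ℕ =>
      (((y.1 : ℝ) + 1) ^ C * ((y.1 : ℝ) + 1) ^ (-u.re)) * (((y.2 : ℝ) + 1) ^ (-(u + v).re))) :=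
    S3.mul_of_nonneg S4 (fun a => by positivity) (fun c => by positivity)
  have h234 : Summable (fun y : ℕ × ℕ × ℕ =>
      (if (y.1 + 1) ∣ q then (1 : ℝ) else 0) *
        ((((y.2.1 : ℝ) + 1) ^ C * ((y.2.1 : ℝ) + 1) ^ (-u.re)) *
          (((y.2.2 : ℝ) + 1) ^ (-(u + v).re)))) :=
    S2.mul_of_nonneg h34 (fun b => by dsimp only; split <;> norm_num)
      (fun y => by positivity)
  have hS := S1.mul_of_nonneg h234
    (fun n => mul_nonneg (mul_nonneg hK (by positivity)) (by positivity))
    (fun y => mul_nonneg (by dsimp only; split <;> norm_num) (by positivity))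
  exact hS.congr (fun p => rfl)

private lemma nat_div_fact {b q a : ℕ} (hbq : (b + 1) ∣ q) :
    ((1 : ℕ) * ((q * (a + 1) / (b + 1)) * ((b + 1) : ℕ))) = q * (a + 1) := by
  obtain ⟨q', rfl⟩ := hbq
  rw [one_mul, mul_assoc, Nat.mul_div_cancel_left _ (Nat.succ_pos b)]
  ring

private lemma norm_FF_le (hN : 0 < N) (hK : 0 ≤ K) (hq : 0 < q) (hu : 0 ≤ u.re)
    (hbd : ∀ m n : ℕ, 0 < m → 0 < n →
      ‖A m n‖ + ‖At m n‖ ≤ K * ((m * n : ℕ) : ℝ) ^ C)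
    (p : ℕ × ℕ × ℕ × ℕ) :
    ‖FF N ψ At q cs χ u v p‖ ≤ DD q u v C K p := by
  obtain ⟨n, b, a, c⟩ := p
  unfold FF DD
  rw [norm_mul]
  by_cases hbq : (b + 1) ∣ q
  · rw [if_pos hbq]
    by_cases hn : Nat.Coprime (n + 1) N
    · rw [if_pos ⟨hbq, hn⟩]
      -- bound each factor of rT
      have hArg : ((n + 1) * (b + 1)) * (q * (a + 1) / (b + 1)) = (n + 1) * (q * (a + 1)) := by
        obtain ⟨q', rfl⟩ := hbq
        rw [mul_assoc (b + 1) q' (a + 1), Nat.mul_div_cancel_left _ (Nat.succ_pos b)]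
        ring
      have hAt : ‖At ((n + 1) * (b + 1)) (q * (a + 1) / (b + 1))‖
          ≤ K * (((n : ℝ) + 1) ^ C * ((q : ℝ) ^ C * ((a : ℝ) + 1) ^ C)) := by
        have h := hbd ((n + 1) * (b + 1)) (q * (a + 1) / (b + 1))
          (by positivity) (by
            obtain ⟨q', rfl⟩ := hbq
            rw [mul_assoc, Nat.mul_div_cancel_left _ (Nat.succ_pos b)]
            have : 0 < q' := by
              rcases Nat.eq_zero_or_pos q' with h' | h'
              · subst h'; simp at hq
              · exact h'
            positivity)
        have h' : ‖At ((n + 1) * (b + 1)) (q * (a + 1) / (b + 1))‖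
            ≤ K * ((((n + 1) * (b + 1)) * (q * (a + 1) / (b + 1)) : ℕ) : ℝ) ^ C :=
          le_trans (le_add_of_nonneg_left (norm_nonneg _)) h
        calc ‖At ((n + 1) * (b + 1)) (q * (a + 1) / (b + 1))‖
            ≤ K * ((((n + 1) * (b + 1)) * (q * (a + 1) / (b + 1)) : ℕ) : ℝ) ^ C := h'
          _ = K * (((n : ℝ) + 1) ^ C * ((q : ℝ) ^ C * ((a : ℝ) + 1) ^ C)) := by
              rw [hArg]
              rw [show (((n + 1) * (q * (a + 1)) : ℕ) : ℝ)
                  = ((n : ℝ) + 1) * ((q : ℝ) * ((a : ℝ) + 1)) by push_cast; ring]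
              rw [Real.mul_rpow (by positivity) (by positivity),
                Real.mul_rpow (by positivity) (by positivity)]
      -- remaining factors
      unfold rT
      simp only [norm_mul]
      have hψ1 : ‖ψ (((n + 1) * q : ℕ) : ZMod N)‖ ≤ 1 := DirichletCharacter.norm_le_one _ _
      have hχ1 : ‖conjChar χ (((a + 1) * (b + 1) : ℕ) : ZMod cs)‖ ≤ 1 :=
        DirichletCharacter.norm_le_one _ _
      have hnv : ‖((n + 1 : ℕ) : ℂ) ^ (-v)‖ = ((n : ℝ) + 1) ^ (-v.re) := norm_cpow_nat n v
      have hau : ‖(((a + 1) * (b + 1) : ℕ) : ℂ) ^ (-u)‖ ≤ ((a : ℝ) + 1) ^ (-u.re) := by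
        have he : ‖(((a + 1) * (b + 1) : ℕ) : ℂ) ^ (-u)‖
            = ((((a + 1) * (b + 1) : ℕ)) : ℝ) ^ (-u.re) := by
          rw [Complex.norm_natCast_cpow_of_pos (by positivity), Complex.neg_re]
        rw [he]
        have h1 : ((a : ℝ) + 1) ≤ ((((a + 1) * (b + 1) : ℕ)) : ℝ) := by
          push_cast
          nlinarith [Nat.cast_nonneg (α := ℝ) a, Nat.cast_nonneg (α := ℝ) b]
        exact Real.rpow_le_rpow_of_nonpos (by positivity) h1 (by linarith)
      have hfl : ‖fL N cs χ (u + v) c‖ ≤ ((c : ℝ) + 1) ^ (-(u + v).re) :=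
        norm_fL_le N cs χ (u + v) c
      -- combine
      calc ‖At ((n + 1) * (b + 1)) (q * (a + 1) / (b + 1))‖ * ‖ψ (((n + 1) * q : ℕ) : ZMod N)‖ *
            ‖conjChar χ (((a + 1) * (b + 1) : ℕ) : ZMod cs)‖ * ‖((n + 1 : ℕ) : ℂ) ^ (-v)‖ *
            ‖(((a + 1) * (b + 1) : ℕ) : ℂ) ^ (-u)‖ * ‖fL N cs χ (u + v) c‖
          ≤ ‖At ((n + 1) * (b + 1)) (q * (a + 1) / (b + 1))‖ * 1 * 1 *
            (((n : ℝ) + 1) ^ (-v.re)) * (((a : ℝ) + 1) ^ (-u.re)) *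
            (((c : ℝ) + 1) ^ (-(u + v).re)) := by
            rw [hnv]
            gcongr
        _ = ‖At ((n + 1) * (b + 1)) (q * (a + 1) / (b + 1))‖ *
            ((((n : ℝ) + 1) ^ (-v.re)) * (((a : ℝ) + 1) ^ (-u.re)) *
              (((c : ℝ) + 1) ^ (-(u + v).re))) := by ring
        _ ≤ (K * (((n : ℝ) + 1) ^ C * ((q : ℝ) ^ C * ((a : ℝ) + 1) ^ C))) *
            ((((n : ℝ) + 1) ^ (-v.re)) * (((a : ℝ) + 1) ^ (-u.re)) *
              (((c : ℝ) + 1) ^ (-(u + v).re))) :=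
            mul_le_mul_of_nonneg_right hAt (by positivity)
        _ = ((K * (q : ℝ) ^ C) * (((n : ℝ) + 1) ^ C * ((n : ℝ) + 1) ^ (-v.re))) *
            ((1 : ℝ) * ((((a : ℝ) + 1) ^ C * ((a : ℝ) + 1) ^ (-u.re)) *
              (((c : ℝ) + 1) ^ (-(u + v).re)))) := by ring
    · rw [if_neg (fun h => hn h.2)]
      simp only [norm_zero, zero_mul]
      have h1 : (0:ℝ) ≤ (K * (q : ℝ) ^ C) * (((n : ℝ) + 1) ^ C * ((n : ℝ) + 1) ^ (-v.re)) :=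
        mul_nonneg (mul_nonneg hK (by positivity)) (by positivity)
      have h2 : (0:ℝ) ≤ (1 : ℝ) * ((((a : ℝ) + 1) ^ C * ((a : ℝ) + 1) ^ (-u.re)) *
          (((c : ℝ) + 1) ^ (-(u + v).re))) := by positivity
      exact mul_nonneg h1 h2
  · rw [if_neg (fun h => hbq h.1), if_neg hbq]
    simp only [norm_zero, zero_mul, mul_zero]
    exact le_refl 0

private lemma summable_FF (hN : 0 < N) (hK : 0 ≤ K) (hq : 0 < q)
    (hbd : ∀ m n : ℕ, 0 < m → 0 < n →
      ‖A m n‖ + ‖At m n‖ ≤ K * ((m * n : ℕ) : ℝ) ^ C)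
    (hC : 0 < C) (hu : C + 1 < u.re) (hv : C + 1 < v.re) :
    Summable (FF N ψ At q cs χ u v) := by
  have huv : 1 < (u + v).re := by
    rw [Complex.add_re]
    linarith
  apply Summable.of_norm
  exact Summable.of_nonneg_of_le (fun _ => norm_nonneg _)
    (norm_FF_le N ψ A At q cs χ u v C K hN hK hq (by linarith) hbd)
    (DD_summable q u v C K hK hq hu hv huv)

end Norms

end Stmt6Aux
namespace Stmt6Aux

open Finset

section Pair

variable (N : ℕ) (ψ : DirichletCharacter ℂ N) (A At : ℕ → ℕ → ℂ) (q cs : ℕ)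
  (χ : DirichletCharacter ℂ cs) (u v : ℂ)

private lemma pair_eq (hN : 0 < N) (hq : 0 < q) (hqN : Nat.Coprime q N)
    (hHt : ∀ m n₁ n₂ : ℕ, 0 < m → 0 < n₁ → 0 < n₂ → Nat.Coprime (n₁ * n₂) N →
      At 1 m * At n₂ n₁ = heckeRHS2 (conjChar ψ) At m n₁ n₂)
    (hAAt : ∀ n q' : ℕ, 0 < n → 0 < q' → Nat.Coprime (n * q') N →
      A q' n = ψ ((n * q' : ℕ) : ZMod N) * At n q')
    (n m : ℕ) :
    fA N A q v n * fB At cs χ u m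
      = ∑' t : ℕ × ℕ × ℕ, gg N ψ At q cs χ u v ((n, m), t) := by
  by_cases hn : Nat.Coprime (n + 1) N
  · have hA' := hAAt (n + 1) q (Nat.succ_pos n) hq (Nat.Coprime.mul hn hqN)
    have hH := hHt (m + 1) q (n + 1) (Nat.succ_pos m) hq (Nat.succ_pos n)
      (Nat.Coprime.mul hqN hn)
    have h0 : ∀ t : ℕ × ℕ × ℕ,
        t ∉ (Finset.range (m + 1 + 1) ×ˢ Finset.range (m + 1 + 1) ×ˢ
          Finset.range (m + 1 + 1)).filter
          (fun t : ℕ × ℕ × ℕ => t.1 * (t.2.1 * t.2.2) = m + 1 ∧ t.2.1 ∣ q ∧ t.2.2 ∣ (n + 1)) →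
        gg N ψ At q cs χ u v ((n, m), t) = 0 := by
      intro t ht
      unfold gg
      split
      case isTrue h =>
        exfalso
        apply ht
        obtain ⟨h1, h2, h3, -⟩ := h
        have h1' : t.1 * (t.2.1 * t.2.2) = m + 1 := h1
        have h2' : t.2.1 ∣ q := h2
        have h3' : t.2.2 ∣ (n + 1) := h3
        have hb1 : t.1 ≤ m + 1 := Nat.le_of_dvd (Nat.succ_pos m) ⟨t.2.1 * t.2.2, h1'.symm⟩
        have hb2 : t.2.1 ≤ m + 1 := Nat.le_of_dvd (Nat.succ_pos m)
          ⟨t.1 * t.2.2, by rw [← h1']; ring⟩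
        have hb3 : t.2.2 ≤ m + 1 := Nat.le_of_dvd (Nat.succ_pos m)
          ⟨t.1 * t.2.1, by rw [← h1']; ring⟩
        simp only [Finset.mem_filter, Finset.mem_product, Finset.mem_range]
        exact ⟨⟨by omega, by omega, by omega⟩, h1', h2', h3'⟩
      case isFalse => rfl
    rw [tsum_eq_sum h0]
    unfold fA fB
    rw [if_pos hn, hA']
    calc (ψ (((n + 1) * q : ℕ) : ZMod N) * At (n + 1) q * ((n + 1 : ℕ) : ℂ) ^ (-v)) *
          (At 1 (m + 1) * conjChar χ ((m + 1 : ℕ) : ZMod cs) * ((m + 1 : ℕ) : ℂ) ^ (-u))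
        = (ψ (((n + 1) * q : ℕ) : ZMod N) * ((n + 1 : ℕ) : ℂ) ^ (-v) *
            conjChar χ ((m + 1 : ℕ) : ZMod cs) * ((m + 1 : ℕ) : ℂ) ^ (-u)) *
          (At 1 (m + 1) * At (n + 1) q) := by ring
      _ = _ := by
          rw [hH]
          unfold heckeRHS2
          rw [Finset.mul_sum]
          refine Finset.sum_congr rfl fun t ht => ?_
          rw [Finset.mem_filter] at ht
          obtain ⟨-, h1, h2, h3⟩ := ht
          unfold gg
          rw [if_pos (show _ ∧ _ ∧ _ ∧ _ from ⟨h1, h2, h3, hn⟩)]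
  · unfold fA
    rw [if_neg hn, zero_mul]
    symm
    have hz : ∀ t : ℕ × ℕ × ℕ, gg N ψ At q cs χ u v ((n, m), t) = 0 := fun t => by
      unfold gg
      rw [if_neg (fun h => hn h.2.2.2)]
    simp only [hz]
    exact tsum_zero

private lemma collapse (hq : 0 < q) (n : ℕ)
    (hS : Summable (fun y : ℕ × ℕ × ℕ => FF N ψ At q cs χ u v (n, y))) :
    (∑' y : ℕ × ℕ × ℕ, FF N ψ At q cs χ u v (n, y))
      = fR N ψ At q cs χ u v n * (∑' l : ℕ, fL N cs χ (u + v) l) := by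
  by_cases hn : Nat.Coprime (n + 1) N
  · rw [Summable.tsum_prod' hS hS.prod_factor]
    have hb : ∀ b : ℕ, (∑' z : ℕ × ℕ, FF N ψ At q cs χ u v (n, (b, z)))
        = (if (b + 1) ∣ q then (∑' a : ℕ, rT N ψ At q cs χ u v n (b + 1) a) else 0) *
          (∑' l : ℕ, fL N cs χ (u + v) l) := by
      intro b
      rw [Summable.tsum_prod' (hS.prod_factor b) (hS.prod_factor b).prod_factor]
      by_cases hbq : (b + 1) ∣ q
      · have ha : ∀ a : ℕ, (∑' c : ℕ, FF N ψ At q cs χ u v (n, (b, (a, c))))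
            = rT N ψ At q cs χ u v n (b + 1) a * (∑' l : ℕ, fL N cs χ (u + v) l) := by
          intro a
          have he : ∀ c : ℕ, FF N ψ At q cs χ u v (n, (b, (a, c)))
              = rT N ψ At q cs χ u v n (b + 1) a * fL N cs χ (u + v) c := by
            intro c
            unfold FF
            rw [if_pos (show _ ∧ _ from ⟨hbq, hn⟩)]
          simp only [he]
          exact tsum_mul_left
        simp only [ha]
        rw [if_pos hbq, tsum_mul_right]
      · have ha : ∀ a : ℕ, (∑' c : ℕ, FF N ψ At q cs χ u v (n, (b, (a, c)))) = 0 := by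
          intro a
          have he : ∀ c : ℕ, FF N ψ At q cs χ u v (n, (b, (a, c))) = 0 := by
            intro c
            unfold FF
            rw [if_neg (fun h => hbq h.1), zero_mul]
          simp only [he]
          exact tsum_zero
        simp only [ha]
        rw [if_neg hbq, zero_mul, tsum_zero]
    simp only [hb]
    rw [tsum_eq_sum (s := q.divisors.image (fun d => d - 1)) ?h0]
    case h0 =>
      intro b hbmem
      have hnd : ¬ (b + 1) ∣ q := by
        intro hdvd
        apply hbmem
        refine Finset.mem_image.mpr ⟨b + 1, Nat.mem_divisors.mpr ⟨hdvd, hq.ne'⟩, ?_⟩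
        omega
      rw [if_neg hnd, zero_mul]
    rw [Finset.sum_image ?inj]
    case inj =>
      intro x hx y hy hxy
      have hx1 := Nat.pos_of_mem_divisors hx
      have hy1 := Nat.pos_of_mem_divisors hy
      simp only at hxy
      omega
    unfold fR
    rw [if_pos hn, ← Finset.sum_mul]
    congr 1
    refine Finset.sum_congr rfl fun d hd => ?_
    have hd1 : d - 1 + 1 = d := by
      have := Nat.pos_of_mem_divisors hd
      omega
    rw [hd1, if_pos (Nat.dvd_of_mem_divisors hd)]
  · have hz : ∀ y : ℕ × ℕ × ℕ, FF N ψ At q cs χ u v (n, y) = 0 := by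
      intro y
      unfold FF
      rw [if_neg (fun h => hn h.2), zero_mul]
    simp only [hz]
    unfold fR
    rw [if_neg hn, zero_mul]
    exact tsum_zero

private lemma tsum_fL_ne_zero (z : ℂ) (hz : 4 ≤ z.re) :
    (∑' l : ℕ, fL N cs χ z l) ≠ 0 := by
  have hb : ∀ l : ℕ, ‖fL N cs χ z (l + 1)‖
      ≤ (1 / 4) * (1 / ((l : ℝ) + 1) - 1 / ((l : ℝ) + 2)) := by
    intro l
    have h0 : ‖fL N cs χ z (l + 1)‖ ≤ ((l : ℝ) + 1 + 1) ^ (-z.re) := by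
      have h := norm_fL_le N cs χ z (l + 1)
      push_cast at h
      exact h
    have hl0 : (0 : ℝ) ≤ (l : ℝ) := Nat.cast_nonneg l
    have hineq : ((l : ℝ) + 1 + 1) ^ (-z.re)
        ≤ (1 / 4) * (1 / ((l : ℝ) + 1) - 1 / ((l : ℝ) + 2)) := by
      have hbase : (1 : ℝ) ≤ (l : ℝ) + 2 := by linarith
      have h4 : ((l : ℝ) + 2) ^ (4 : ℝ) ≤ ((l : ℝ) + 2) ^ z.re :=
        Real.rpow_le_rpow_of_exponent_le hbase hz
      have h4' : ((l : ℝ) + 2) ^ (4 : ℝ) = ((l : ℝ) + 2) ^ (4 : ℕ) := by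
        rw [← Real.rpow_natCast]
        norm_num
      have hpoly : 4 * (((l : ℝ) + 1) * ((l : ℝ) + 2)) ≤ ((l : ℝ) + 2) ^ (4 : ℕ) := by
        have e1 : (4 : ℝ) ≤ ((l : ℝ) + 2) ^ 2 := by nlinarith
        have e2 : ((l : ℝ) + 1) * ((l : ℝ) + 2) ≤ ((l : ℝ) + 2) ^ 2 := by nlinarith
        calc 4 * (((l : ℝ) + 1) * ((l : ℝ) + 2))
            ≤ (((l : ℝ) + 2) ^ 2) * (((l : ℝ) + 2) ^ 2) :=
              mul_le_mul e1 e2 (by positivity) (by positivity)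
          _ = ((l : ℝ) + 2) ^ (4 : ℕ) := by ring
      have hstep : 4 * (((l : ℝ) + 1) * ((l : ℝ) + 2)) ≤ ((l : ℝ) + 2) ^ z.re := by
        rw [← h4'] at hpoly
        linarith
      have hinv : 1 / (((l : ℝ) + 2) ^ z.re) ≤ 1 / (4 * (((l : ℝ) + 1) * ((l : ℝ) + 2))) :=
        one_div_le_one_div_of_le (by positivity) hstep
      have heq2 : ((l : ℝ) + 1 + 1) ^ (-z.re) = 1 / (((l : ℝ) + 2) ^ z.re) := by
        rw [show (l : ℝ) + 1 + 1 = (l : ℝ) + 2 by ring, Real.rpow_neg (by linarith), one_div]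
      rw [heq2]
      calc 1 / (((l : ℝ) + 2) ^ z.re) ≤ 1 / (4 * (((l : ℝ) + 1) * ((l : ℝ) + 2))) := hinv
        _ = (1 / 4) * (1 / ((l : ℝ) + 1) - 1 / ((l : ℝ) + 2)) := by
            field_simp
            ring
    exact le_trans h0 hineq
  have htel := telescope_hasSum
  have hsum_bound : Summable (fun l : ℕ => (1 / 4) * (1 / ((l : ℝ) + 1) - 1 / ((l : ℝ) + 2))) :=
    htel.summable.mul_left _
  have hsum_tail : Summable (fun l : ℕ => ‖fL N cs χ z (l + 1)‖) :=
    Summable.of_nonneg_of_le (fun _ => norm_nonneg _) hb hsum_bound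
  have hsum_norm : Summable (fun l : ℕ => ‖fL N cs χ z l‖) :=
    (summable_nat_add_iff 1).mp hsum_tail
  have hsum : Summable (fL N cs χ z) := hsum_norm.of_norm
  have h00 : fL N cs χ z 0 = 1 := by
    unfold fL
    rw [if_pos (Nat.coprime_one_left N)]
    norm_num
  have htail : ‖∑' l : ℕ, fL N cs χ z (l + 1)‖ ≤ 1 / 4 := by
    calc ‖∑' l : ℕ, fL N cs χ z (l + 1)‖ ≤ ∑' l : ℕ, ‖fL N cs χ z (l + 1)‖ :=
        norm_tsum_le_tsum_norm hsum_tail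
      _ ≤ ∑' l : ℕ, (1 / 4) * (1 / ((l : ℝ) + 1) - 1 / ((l : ℝ) + 2)) :=
        Summable.tsum_le_tsum hb hsum_tail hsum_bound
      _ = 1 / 4 := by
          rw [(htel.mul_left (1 / 4)).tsum_eq]
          norm_num
  intro hcontra
  rw [Summable.tsum_eq_zero_add hsum, h00] at hcontra
  have hm1 : (∑' l : ℕ, fL N cs χ z (l + 1)) = -1 := by linear_combination hcontra
  rw [hm1] at htail
  norm_num at htail

end Pair

end Stmt6Aux
namespace Stmt6Aux

open Finset

set_option maxHeartbeats 1000000 in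
private theorem core (N : ℕ) (ψ : DirichletCharacter ℂ N) (A At : ℕ → ℕ → ℂ) (q cs : ℕ)
    (χ : DirichletCharacter ℂ cs) (u v : ℂ) (C K : ℝ)
    (hN : 0 < N) (hq : 0 < q) (hqN : Nat.Coprime q N)
    (hHt : ∀ m n₁ n₂ : ℕ, 0 < m → 0 < n₁ → 0 < n₂ → Nat.Coprime (n₁ * n₂) N →
      At 1 m * At n₂ n₁ = heckeRHS2 (conjChar ψ) At m n₁ n₂)
    (hAAt : ∀ n q' : ℕ, 0 < n → 0 < q' → Nat.Coprime (n * q') N →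
      A q' n = ψ ((n * q' : ℕ) : ZMod N) * At n q')
    (hbd : ∀ m n : ℕ, 0 < m → 0 < n →
      ‖A m n‖ + ‖At m n‖ ≤ K * ((m * n : ℕ) : ℝ) ^ C)
    (hC : 0 < C) (hK : 0 ≤ K) (hu : C + 1 < u.re) (hv : C + 1 < v.re) :
    (∑' n : ℕ, fA N A q v n) * (∑' m : ℕ, fB At cs χ u m)
      = (∑' l : ℕ, fL N cs χ (u + v) l) * (∑' n : ℕ, fR N ψ At q cs χ u v n) := by
  have hSfA := summable_norm_fA N A At q v C K hK hbd hq hv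
  have hSfB := summable_norm_fB A At cs χ u C K hK hbd hu
  have hSFF := summable_FF N ψ A At q cs χ u v C K hN hK hq hbd hC hu hv
  have hggFF : (gg N ψ At q cs χ u v) ∘ emb = FF N ψ At q cs χ u v :=
    funext (gg_emb N ψ At q cs χ u v hN)
  have hSgg : Summable (gg N ψ At q cs χ u v) :=
    (emb_inj.summable_iff (gg_not_range N ψ At q cs χ u v)).mp
      (by rw [hggFF]; exact hSFF)
  have hsupp : Function.support (gg N ψ At q cs χ u v) ⊆ Set.range emb :=
    Function.support_subset_iff'.mpr (gg_not_range N ψ At q cs χ u v)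
  calc (∑' n : ℕ, fA N A q v n) * (∑' m : ℕ, fB At cs χ u m)
      = ∑' z : ℕ × ℕ, fA N A q v z.1 * fB At cs χ u z.2 :=
        tsum_mul_tsum_of_summable_norm hSfA hSfB
    _ = ∑' z : ℕ × ℕ, ∑' t : ℕ × ℕ × ℕ, gg N ψ At q cs χ u v (z, t) := by
        refine tsum_congr fun z => ?_
        have h := pair_eq N ψ A At q cs χ u v hN hq hqN hHt hAAt z.1 z.2
        simpa using h
    _ = ∑' x : (ℕ × ℕ) × ℕ × ℕ × ℕ, gg N ψ At q cs χ u v x :=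
        (Summable.tsum_prod' hSgg hSgg.prod_factor).symm
    _ = ∑' p : ℕ × ℕ × ℕ × ℕ, gg N ψ At q cs χ u v (emb p) :=
        (emb_inj.tsum_eq hsupp).symm
    _ = ∑' p : ℕ × ℕ × ℕ × ℕ, FF N ψ At q cs χ u v p :=
        tsum_congr fun p => gg_emb N ψ At q cs χ u v hN p
    _ = ∑' n : ℕ, ∑' y : ℕ × ℕ × ℕ, FF N ψ At q cs χ u v (n, y) :=
        Summable.tsum_prod' hSFF hSFF.prod_factor
    _ = ∑' n : ℕ, fR N ψ At q cs χ u v n * (∑' l : ℕ, fL N cs χ (u + v) l) :=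
        tsum_congr fun n => collapse N ψ At q cs χ u v hq n (hSFF.prod_factor n)
    _ = (∑' n : ℕ, fR N ψ At q cs χ u v n) * (∑' l : ℕ, fL N cs χ (u + v) l) :=
        tsum_mul_right
    _ = (∑' l : ℕ, fL N cs χ (u + v) l) * (∑' n : ℕ, fR N ψ At q cs χ u v n) :=
        mul_comm _ _

end Stmt6Aux

/-- the double Dirichlet series
`Z(s,w) = L_q^{(N)}(2w-s,F) · L(s,F×χ*) / L^{(N)}(2w-2s+1, conj χ*)` satisfies, for `Re w`
sufficiently large and `-Re s` sufficiently large,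
`Z(s,w) = G_±(s) ψ(c*) χ*(N) c*^{-3s} τ(χ*)³
   ∑_{(n,N)=1} ∑_{d₁∣q} ∑_{d₀≥1} Ã(nd₁, qd₀/d₁) ψ(nq) conj(χ*)(d₀d₁)
     n^{-(2w-s)} (d₀d₁)^{-(1-s)}`. -/
theorem statement_6 (N : ℕ) (hN : 0 < N) (ψ : DirichletCharacter ℂ N)
    (A At : ℕ → ℕ → ℂ) (α β γ ε : ℂ) (hαβγ : α + β + γ = 0) (hε : ‖ε‖ = 1)
    (hbd : ∃ C : ℝ, 0 < C ∧ ∃ K : ℝ, ∀ m n : ℕ, 0 < m → 0 < n →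
      ‖A m n‖ + ‖At m n‖ ≤ K * ((m * n : ℕ) : ℝ) ^ C)
    -- Hecke relation for `Ã`
    (hHt : ∀ m n₁ n₂ : ℕ, 0 < m → 0 < n₁ → 0 < n₂ → Nat.Coprime (n₁ * n₂) N →
      At 1 m * At n₂ n₁ = heckeRHS2 (conjChar ψ) At m n₁ n₂)
    -- `A(q,n) = ψ(nq) Ã(n,q)` for `(nq,N)=1`
    (hAAt : ∀ n q' : ℕ, 0 < n → 0 < q' → Nat.Coprime (n * q') N →
      A q' n = ψ ((n * q' : ℕ) : ZMod N) * At n q')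
    -- twisted functional-equation hypothesis, in force for all primitive characters
    (hFE : ∀ cs : ℕ, 0 < cs → ∀ χ : DirichletCharacter ℂ cs, χ.IsPrimitive →
      Nat.Coprime cs N →
      ∃ L₁ L₂ : ℂ → ℂ, Differentiable ℂ L₁ ∧ Differentiable ℂ L₂ ∧
        (∃ T : ℝ, ∀ s : ℂ, T < s.re →
          Summable (fun n : ℕ =>
            A 1 (n + 1) * χ ((n + 1 : ℕ) : ZMod cs) * ((n + 1 : ℕ) : ℂ) ^ (-s)) ∧
          L₁ s = ∑' n : ℕ,
            A 1 (n + 1) * χ ((n + 1 : ℕ) : ZMod cs) * ((n + 1 : ℕ) : ℂ) ^ (-s)) ∧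
        (∃ T : ℝ, ∀ s : ℂ, T < s.re →
          Summable (fun n : ℕ =>
            At 1 (n + 1) * conjChar χ ((n + 1 : ℕ) : ZMod cs) * ((n + 1 : ℕ) : ℂ) ^ (-s)) ∧
          L₂ s = ∑' n : ℕ,
            At 1 (n + 1) * conjChar χ ((n + 1 : ℕ) : ZMod cs) * ((n + 1 : ℕ) : ℂ) ^ (-s)) ∧
        (∀ s : ℂ, L₁ s = Gpm N ψ ε α β γ χ s * ψ ((cs : ℕ) : ZMod N) *
          χ ((N : ℕ) : ZMod cs) * (cs : ℂ) ^ (-(3 * s)) * tau χ ^ 3 * L₂ (1 - s)))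
    (q : ℕ) (hq : 0 < q) (hqN : Nat.Coprime q N)
    (cs : ℕ) (hcs : 0 < cs) (χ : DirichletCharacter ℂ cs) (hprim : χ.IsPrimitive)
    (hcsN : Nat.Coprime cs N)
    -- `L₁` is the holomorphic continuation of `L(s,F×χ*)`
    (L₁ : ℂ → ℂ) (hL₁ : Differentiable ℂ L₁)
    (hL₁ser : ∃ T : ℝ, ∀ s : ℂ, T < s.re →
      Summable (fun n : ℕ =>
        A 1 (n + 1) * χ ((n + 1 : ℕ) : ZMod cs) * ((n + 1 : ℕ) : ℂ) ^ (-s)) ∧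
      L₁ s = ∑' n : ℕ,
        A 1 (n + 1) * χ ((n + 1 : ℕ) : ZMod cs) * ((n + 1 : ℕ) : ℂ) ^ (-s)) :
    ∃ T₂ : ℝ, ∀ w : ℂ, T₂ < w.re → ∃ T₁ : ℝ, ∀ s : ℂ, s.re < T₁ →
      (∑' n : ℕ, if Nat.Coprime (n + 1) N then
          A q (n + 1) * ((n + 1 : ℕ) : ℂ) ^ (-(2 * w - s)) else 0) * L₁ s /
        LN N (conjChar χ) (2 * w - 2 * s + 1)
      = Gpm N ψ ε α β γ χ s * ψ ((cs : ℕ) : ZMod N) * χ ((N : ℕ) : ZMod cs) *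
          (cs : ℂ) ^ (-(3 * s)) * tau χ ^ 3 *
          ∑' n : ℕ, if Nat.Coprime (n + 1) N then
            ∑ d₁ ∈ q.divisors, ∑' d₀ : ℕ,
              At ((n + 1) * d₁) (q * (d₀ + 1) / d₁) * ψ (((n + 1) * q : ℕ) : ZMod N) *
                conjChar χ (((d₀ + 1) * d₁ : ℕ) : ZMod cs) *
                ((n + 1 : ℕ) : ℂ) ^ (-(2 * w - s)) *
                (((d₀ + 1) * d₁ : ℕ) : ℂ) ^ (-(1 - s))
          else 0 := by
  obtain ⟨C, hC, K, hbdK⟩ := hbd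
  have hK' : (0 : ℝ) ≤ max K 0 := le_max_right _ _
  have hbd' : ∀ m n : ℕ, 0 < m → 0 < n →
      ‖A m n‖ + ‖At m n‖ ≤ (max K 0) * ((m * n : ℕ) : ℝ) ^ C :=
    fun m n hm hn => le_trans (hbdK m n hm hn)
      (mul_le_mul_of_nonneg_right (le_max_left _ _) (Real.rpow_nonneg (Nat.cast_nonneg _) _))
  obtain ⟨L₁', L₂, hdL₁', hdL₂, ⟨Ta, hA⟩, ⟨Tb, hB⟩, hfe⟩ := hFE cs hcs χ hprim hcsN
  obtain ⟨Tc, hCser⟩ := hL₁ser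
  have hLeq : L₁ = L₁' := by
    have h1 : AnalyticOnNhd ℂ L₁ Set.univ := analyticOnNhd_univ_iff_differentiable.mpr hL₁
    have h2 : AnalyticOnNhd ℂ L₁' Set.univ := analyticOnNhd_univ_iff_differentiable.mpr hdL₁'
    have hopen : IsOpen {z : ℂ | max Ta Tc < z.re} :=
      isOpen_lt continuous_const Complex.continuous_re
    have hmem : ((max Ta Tc + 1 : ℝ) : ℂ) ∈ {z : ℂ | max Ta Tc < z.re} := by
      simp only [Set.mem_setOf_eq, Complex.ofReal_re]
      linarith
    have hev : L₁ =ᶠ[nhds ((max Ta Tc + 1 : ℝ) : ℂ)] L₁' := by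
      refine Filter.eventuallyEq_of_mem (hopen.mem_nhds hmem) fun z hz => ?_
      have hz' : max Ta Tc < z.re := hz
      rw [(hCser z (lt_of_le_of_lt (le_max_right _ _) hz')).2,
        (hA z (lt_of_le_of_lt (le_max_left _ _) hz')).2]
    exact AnalyticOnNhd.eq_of_eventuallyEq h1 h2 hev
  refine ⟨0, fun w hw => ?_⟩
  refine ⟨min (min (-Tb) (2 * w.re - C - 2)) (-C - 2), fun s hs => ?_⟩
  have hs1 : s.re < -Tb := lt_of_lt_of_le hs (le_trans (min_le_left _ _) (min_le_left _ _))
  have hs2 : s.re < 2 * w.re - C - 2 :=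
    lt_of_lt_of_le hs (le_trans (min_le_left _ _) (min_le_right _ _))
  have hs3 : s.re < -C - 2 := lt_of_lt_of_le hs (min_le_right _ _)
  have hre1 : (1 - s).re = 1 - s.re := by simp
  have hre2 : (2 * w - s).re = 2 * w.re - s.re := by simp
  have hTb : Tb < (1 - s).re := by rw [hre1]; linarith
  have hu : C + 1 < (1 - s).re := by rw [hre1]; linarith
  have hv : C + 1 < (2 * w - s).re := by rw [hre2]; linarith
  have huv4 : 4 ≤ ((1 - s) + (2 * w - s)).re := by
    rw [Complex.add_re, hre1, hre2]
    linarith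
  have hL1s : L₁ s = Gpm N ψ ε α β γ χ s * ψ ((cs : ℕ) : ZMod N) * χ ((N : ℕ) : ZMod cs) *
      (cs : ℂ) ^ (-(3 * s)) * tau χ ^ 3 * L₂ (1 - s) := by
    rw [hLeq]
    exact hfe s
  have hL2v : L₂ (1 - s) = ∑' m : ℕ, Stmt6Aux.fB At cs χ (1 - s) m := (hB (1 - s) hTb).2
  have hLNv : LN N (conjChar χ) (2 * w - 2 * s + 1)
      = ∑' l : ℕ, Stmt6Aux.fL N cs χ ((1 - s) + (2 * w - s)) l := by
    have he : -(2 * w - 2 * s + 1) = -((1 - s) + (2 * w - s)) := by ring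
    unfold LN Stmt6Aux.fL
    exact tsum_congr fun l => by rw [he]
  have e1 : (∑' n : ℕ, if Nat.Coprime (n + 1) N then
      A q (n + 1) * ((n + 1 : ℕ) : ℂ) ^ (-(2 * w - s)) else 0)
      = ∑' n : ℕ, Stmt6Aux.fA N A q (2 * w - s) n := rfl
  have e2 : (∑' n : ℕ, if Nat.Coprime (n + 1) N then
        ∑ d₁ ∈ q.divisors, ∑' d₀ : ℕ,
          At ((n + 1) * d₁) (q * (d₀ + 1) / d₁) * ψ (((n + 1) * q : ℕ) : ZMod N) *
            conjChar χ (((d₀ + 1) * d₁ : ℕ) : ZMod cs) *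
            ((n + 1 : ℕ) : ℂ) ^ (-(2 * w - s)) *
            (((d₀ + 1) * d₁ : ℕ) : ℂ) ^ (-(1 - s))
      else 0) = ∑' n : ℕ, Stmt6Aux.fR N ψ At q cs χ (1 - s) (2 * w - s) n := rfl
  rw [e1, hL1s, hL2v, hLNv, e2]
  have hne := Stmt6Aux.tsum_fL_ne_zero N cs χ ((1 - s) + (2 * w - s)) huv4
  have hcore := Stmt6Aux.core N ψ A At q cs χ (1 - s) (2 * w - s) C (max K 0)
    hN hq hqN hHt hAAt hbd' hC hK' hu hv
  rw [div_eq_iff hne]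
  linear_combination (Gpm N ψ ε α β γ χ s * ψ ((cs : ℕ) : ZMod N) * χ ((N : ℕ) : ZMod cs) *
    (cs : ℂ) ^ (-(3 * s)) * tau χ ^ 3) * hcore


end
end

section
/- Let N be a positive integer, ψ a Dirichlet character modulo N, and A : ℤ_{>0} × ℤ_{>0} → ℂ with A(1,1) = 1 and |A(m,n)| = O((mn)^C) for some C > 0. Assume the two Hecke relations: for all n with (n,N)=1 and all positive integers n₁, n₂, A(n,1)·A(n₂,n₁) = ∑_{abc=n, a|n₁, b|n₂} ψ(ab)·A(cn₂/b, bn₁/a) and A(1,n)·A(n₂,n₁) = ∑_{abc=n, b|n₁, c|n₂} ψ(c)·A(bn₂/c, an₁/b). Then for any Dirichlet character χ and Re(s) sufficiently large, the Dirichlet series has the Euler product ∑_{n≥1, (n,N)=1} A(1,n)·χ(n)·n^{−s} = ∏_{p prime, p ∤ N} (1 − A(1,p)χ(p)p^{−s} + A(p,1)χ(p)²p^{−2s} − χ(p)³ψ(p)p^{−3s})^{−1}. -/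
open Complex
open scoped Classical

noncomputable section

namespace Statement8Aux

open Finset

lemma heckeRHS2_coprime {M : ℕ} (ψ : DirichletCharacter ℂ M) (A : ℕ → ℕ → ℂ) {m n : ℕ}
    (hm : 0 < m) (hmn : Nat.Coprime m n) :
    heckeRHS2 ψ A m n 1 = A 1 (m * n) := by
  unfold heckeRHS2
  have hset : ((Finset.range (m + 1) ×ˢ Finset.range (m + 1) ×ˢ Finset.range (m + 1)).filter
      (fun t => t.1 * (t.2.1 * t.2.2) = m ∧ t.2.1 ∣ n ∧ t.2.2 ∣ 1))
      = {((m : ℕ), ((1 : ℕ), (1 : ℕ)))} := by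
    ext ⟨a, b, c⟩
    simp only [Finset.mem_filter, Finset.mem_product, Finset.mem_range, Finset.mem_singleton,
      Prod.mk.injEq]
    constructor
    · rintro ⟨⟨ha, hb, hc⟩, habc, hbn, hc1⟩
      have hc' : c = 1 := Nat.dvd_one.mp hc1
      subst hc'
      have hbm : b ∣ m := ⟨a, by rw [← habc]; ring⟩
      have hb' : b = 1 := Nat.dvd_one.mp (hmn ▸ Nat.dvd_gcd hbm hbn)
      subst hb'
      omega
    · rintro ⟨rfl, rfl, rfl⟩
      exact ⟨⟨by omega, by omega, by omega⟩, by ring, one_dvd _, one_dvd _⟩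
  rw [hset, Finset.sum_singleton]
  norm_num

lemma heckeRHS2_prime {M : ℕ} (ψ : DirichletCharacter ℂ M) (A : ℕ → ℕ → ℂ) {p : ℕ}
    (hp : p.Prime) (k : ℕ) :
    heckeRHS2 ψ A p (p ^ (k + 1)) 1 = A 1 (p ^ (k + 2)) + A p (p ^ k) := by
  have hp2 := hp.two_le
  unfold heckeRHS2
  have hne : ((p : ℕ), ((1 : ℕ), (1 : ℕ))) ≠ ((1 : ℕ), ((p : ℕ), (1 : ℕ))) := by
    intro h
    rw [Prod.mk.injEq] at h
    omega
  have hset : ((Finset.range (p + 1) ×ˢ Finset.range (p + 1) ×ˢ Finset.range (p + 1)).filter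
      (fun t => t.1 * (t.2.1 * t.2.2) = p ∧ t.2.1 ∣ p ^ (k + 1) ∧ t.2.2 ∣ 1))
      = {((p : ℕ), ((1 : ℕ), (1 : ℕ))), ((1 : ℕ), ((p : ℕ), (1 : ℕ)))} := by
    ext ⟨a, b, c⟩
    simp only [Finset.mem_filter, Finset.mem_product, Finset.mem_range, Finset.mem_insert,
      Finset.mem_singleton, Prod.mk.injEq]
    constructor
    · rintro ⟨⟨ha, hb, hc⟩, habc, hbn, hc1⟩
      have hc' : c = 1 := Nat.dvd_one.mp hc1
      subst hc'
      rw [mul_one] at habc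
      rcases hp.eq_one_or_self_of_dvd a ⟨b, habc.symm⟩ with h1 | h1
      · subst h1
        right
        omega
      · subst h1
        left
        have hb1 : b = 1 := Nat.eq_of_mul_eq_mul_left hp.pos (by omega)
        omega
    · rintro (⟨ha, hb, hc⟩ | ⟨ha, hb, hc⟩) <;> rw [ha, hb, hc]
      · exact ⟨⟨by omega, by omega, by omega⟩, by ring, one_dvd _, one_dvd _⟩
      · exact ⟨⟨by omega, by omega, by omega⟩, by ring,
          dvd_pow_self p (Nat.succ_ne_zero k), one_dvd _⟩
  rw [hset, Finset.sum_pair hne]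
  have e1 : p * p ^ (k + 1) = p ^ (k + 2) := by ring
  have e2 : p ^ (k + 1) / p = p ^ k := by
    rw [pow_succ, Nat.mul_div_assoc _ (dvd_refl p), Nat.div_self hp.pos, mul_one]
  simp [e1, e2]

lemma heckeRHS1_prime {M : ℕ} (ψ : DirichletCharacter ℂ M) (A : ℕ → ℕ → ℂ) {p : ℕ}
    (hp : p.Prime) (k : ℕ) :
    heckeRHS1 ψ A p (p ^ (k + 1)) 1
      = A p (p ^ (k + 1)) + ψ ((p : ℕ) : ZMod M) * A 1 (p ^ k) := by
  have hp2 := hp.two_le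
  unfold heckeRHS1
  have hne : ((1 : ℕ), ((1 : ℕ), (p : ℕ))) ≠ ((p : ℕ), ((1 : ℕ), (1 : ℕ))) := by
    intro h
    rw [Prod.mk.injEq] at h
    omega
  have hset : ((Finset.range (p + 1) ×ˢ Finset.range (p + 1) ×ˢ Finset.range (p + 1)).filter
      (fun t => t.1 * (t.2.1 * t.2.2) = p ∧ t.1 ∣ p ^ (k + 1) ∧ t.2.1 ∣ 1))
      = {((1 : ℕ), ((1 : ℕ), (p : ℕ))), ((p : ℕ), ((1 : ℕ), (1 : ℕ)))} := by
    ext ⟨a, b, c⟩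
    simp only [Finset.mem_filter, Finset.mem_product, Finset.mem_range, Finset.mem_insert,
      Finset.mem_singleton, Prod.mk.injEq]
    constructor
    · rintro ⟨⟨ha, hb, hc⟩, habc, hapk, hb1⟩
      have hb' : b = 1 := Nat.dvd_one.mp hb1
      subst hb'
      rw [one_mul] at habc
      rcases hp.eq_one_or_self_of_dvd a ⟨c, habc.symm⟩ with h1 | h1
      · subst h1
        left
        omega
      · subst h1
        right
        have hc1 : c = 1 := Nat.eq_of_mul_eq_mul_left hp.pos (by omega)
        omega
    · rintro (⟨ha, hb, hc⟩ | ⟨ha, hb, hc⟩) <;> rw [ha, hb, hc]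
      · exact ⟨⟨by omega, by omega, by omega⟩, by ring, one_dvd _, one_dvd _⟩
      · exact ⟨⟨by omega, by omega, by omega⟩, by ring,
          dvd_pow_self p (Nat.succ_ne_zero k), one_dvd _⟩
  rw [hset, Finset.sum_pair hne]
  have e2 : p ^ (k + 1) / p = p ^ k := by
    rw [pow_succ, Nat.mul_div_assoc _ (dvd_refl p), Nat.div_self hp.pos, mul_one]
  simp [e2]

lemma hasSum_shift {u : ℕ → ℂ} {x : ℂ} (h : HasSum u x) (m : ℕ) :
    HasSum (fun k => if k < m then 0 else u (k - m)) x := by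
  have hinj : Function.Injective (fun k : ℕ => k + m) := fun a b hab => by simpa using hab
  rw [← Function.Injective.hasSum_iff hinj (fun y hy => ?_)]
  · convert h using 1
    funext k
    simp only [Function.comp_apply]
    rw [if_neg (by omega)]
    congr 1
    omega
  · have hym : y < m := by
      by_contra hc
      exact hy ⟨y - m, show y - m + m = y by omega⟩
    show (if y < m then (0:ℂ) else _) = 0
    rw [if_pos hym]

lemma local_factor {t : ℕ → ℂ} {a b c X : ℂ}
    (h0 : t 0 = 1) (h1 : t 1 = a) (h2 : t 2 = a * t 1 - b)
    (hrec : ∀ k, t (k + 3) = a * t (k + 2) - b * t (k + 1) + c * t k)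
    (hsum : Summable (fun k => t k * X ^ k)) :
    (∑' k, t k * X ^ k) * (1 - a * X + b * X ^ 2 - c * X ^ 3) = 1 := by
  set S := ∑' k, t k * X ^ k with hSdef
  have hS : HasSum (fun k => t k * X ^ k) S := hsum.hasSum
  have w1 := hasSum_shift (hS.mul_left (a * X)) 1
  have w2 := hasSum_shift (hS.mul_left (b * X ^ 2)) 2
  have w3 := hasSum_shift (hS.mul_left (c * X ^ 3)) 3
  have hcomb := ((hS.sub w1).add w2).sub w3
  have hfun : (fun k => (t k * X ^ k
        - (if k < 1 then 0 else a * X * (t (k - 1) * X ^ (k - 1)))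
        + (if k < 2 then 0 else b * X ^ 2 * (t (k - 2) * X ^ (k - 2)))
        - (if k < 3 then 0 else c * X ^ 3 * (t (k - 3) * X ^ (k - 3)))))
      = fun k => if k = 0 then 1 else 0 := by
    funext k
    match k with
    | 0 => simp [h0]
    | 1 =>
      rw [if_neg (by omega), if_pos (by omega), if_pos (by omega), if_neg (by omega)]
      simp only [show (1:ℕ) - 1 = 0 from rfl, h0, h1]
      ring
    | 2 =>
      rw [if_neg (by omega), if_neg (by omega), if_pos (by omega), if_neg (by omega)]
      simp only [show (2:ℕ) - 1 = 1 from rfl, show (2:ℕ) - 2 = 0 from rfl, h0, h2]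
      ring
    | (n + 3) =>
      rw [if_neg (by omega), if_neg (by omega), if_neg (by omega), if_neg (by omega),
        show n + 3 - 1 = n + 2 from by omega, show n + 3 - 2 = n + 1 from by omega,
        show n + 3 - 3 = n from by omega, hrec n]
      ring
  beta_reduce at hcomb
  rw [hfun] at hcomb
  have hone := hcomb.unique (hasSum_ite_eq 0 1)
  linear_combination hone

end Statement8Aux

open Statement8Aux in
/-- Euler product: under the two Hecke relations and `A(1,1)=1`,
`∑_{n ≥ 1, (n,N)=1} A(1,n) χ(n) n^{-s}
  = ∏_{p ∤ N} (1 - A(1,p)χ(p)p^{-s} + A(p,1)χ(p)²p^{-2s} - χ(p)³ψ(p)p^{-3s})⁻¹`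
for `Re(s)` sufficiently large. -/
theorem statement_8 (N M : ℕ) (hN : 0 < N) (ψ : DirichletCharacter ℂ N)
    (A : ℕ → ℕ → ℂ) (hA11 : A 1 1 = 1)
    (hbd : ∃ C : ℝ, 0 < C ∧ ∃ K : ℝ, ∀ m n : ℕ, 0 < m → 0 < n →
      ‖A m n‖ ≤ K * ((m * n : ℕ) : ℝ) ^ C)
    (hH1 : ∀ n n₁ n₂ : ℕ, 0 < n → 0 < n₁ → 0 < n₂ → Nat.Coprime n N →
      A n 1 * A n₂ n₁ = heckeRHS1 ψ A n n₁ n₂)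
    (hH2 : ∀ n n₁ n₂ : ℕ, 0 < n → 0 < n₁ → 0 < n₂ → Nat.Coprime n N →
      A 1 n * A n₂ n₁ = heckeRHS2 ψ A n n₁ n₂)
    (χ : DirichletCharacter ℂ M) :
    ∃ T : ℝ, ∀ s : ℂ, T < s.re →
      Summable (fun n : ℕ => if Nat.Coprime (n + 1) N then
        A 1 (n + 1) * χ ((n + 1 : ℕ) : ZMod M) * ((n + 1 : ℕ) : ℂ) ^ (-s) else 0) ∧
      Multipliable (fun p : Nat.Primes => if ¬ ((p : ℕ) ∣ N) then
        (1 - A 1 (p : ℕ) * χ ((p : ℕ) : ZMod M) * ((p : ℕ) : ℂ) ^ (-s)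
           + A (p : ℕ) 1 * χ ((p : ℕ) : ZMod M) ^ 2 * ((p : ℕ) : ℂ) ^ (-(2 * s))
           - χ ((p : ℕ) : ZMod M) ^ 3 * ψ ((p : ℕ) : ZMod N) * ((p : ℕ) : ℂ) ^ (-(3 * s)))⁻¹
        else 1) ∧
      (∑' n : ℕ, if Nat.Coprime (n + 1) N then
          A 1 (n + 1) * χ ((n + 1 : ℕ) : ZMod M) * ((n + 1 : ℕ) : ℂ) ^ (-s) else 0)
        = ∏' p : Nat.Primes, if ¬ ((p : ℕ) ∣ N) then
            (1 - A 1 (p : ℕ) * χ ((p : ℕ) : ZMod M) * ((p : ℕ) : ℂ) ^ (-s)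
               + A (p : ℕ) 1 * χ ((p : ℕ) : ZMod M) ^ 2 * ((p : ℕ) : ℂ) ^ (-(2 * s))
               - χ ((p : ℕ) : ZMod M) ^ 3 * ψ ((p : ℕ) : ZMod N) * ((p : ℕ) : ℂ) ^ (-(3 * s)))⁻¹
          else 1 := by
  classical
  obtain ⟨C, hC, K, hK⟩ := hbd
  refine ⟨C + 2, fun s hs => ?_⟩
  -- the global multiplicative function
  set f : ℕ → ℂ := fun n => if n ≠ 0 ∧ Nat.Coprime n N then
      A 1 n * χ ((n : ℕ) : ZMod M) * ((n : ℕ) : ℂ) ^ (-s) else 0 with hf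
  have hf0 : f 0 = 0 := by simp [hf]
  have hf1 : f 1 = 1 := by
    simp [hf, Nat.coprime_one_left, hA11, Complex.one_cpow]
  -- norm bound and summability
  have hcpow_norm : ∀ n : ℕ, 0 < n → ‖((n : ℕ) : ℂ) ^ (-s)‖ = (n : ℝ) ^ (-s.re) := by
    intro n hn
    rw [show ((n : ℕ) : ℂ) = (((n : ℝ) : ℝ) : ℂ) by push_cast; ring,
      Complex.norm_cpow_eq_rpow_re_of_pos (by exact_mod_cast hn), Complex.neg_re]
  have hnorm : ∀ n : ℕ, ‖f n‖ ≤ K * (n : ℝ) ^ (C - s.re) := by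
    intro n
    rcases Nat.eq_zero_or_pos n with rfl | hn
    · rw [hf0]
      simp [Real.zero_rpow (show C - s.re ≠ 0 by intro h; simp [sub_eq_zero] at h; linarith)]
    · simp only [hf]
      split_ifs with h
    -- coprime case
      · rw [norm_mul, norm_mul, hcpow_norm n hn]
        have h1 : ‖A 1 n‖ ≤ K * (n : ℝ) ^ C := by
          have := hK 1 n one_pos hn
          simpa using this
        have h2 : ‖χ ((n : ℕ) : ZMod M)‖ ≤ 1 := χ.norm_le_one _
        have h3 : (0 : ℝ) < (n : ℝ) := by exact_mod_cast hn
        calc ‖A 1 n‖ * ‖χ ((n : ℕ) : ZMod M)‖ * (n : ℝ) ^ (-s.re)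
            ≤ (K * (n : ℝ) ^ C) * 1 * (n : ℝ) ^ (-s.re) := by
              gcongr
              exact (norm_nonneg _).trans h1
          _ = K * (n : ℝ) ^ (C - s.re) := by
              rw [mul_one, mul_assoc, ← Real.rpow_add h3]
              ring_nf
      · have hK0 : (0 : ℝ) ≤ K := by
          have h1 := hK 1 1 one_pos one_pos
          rw [hA11] at h1
          simp [Real.one_rpow] at h1
          linarith
        have : (0 : ℝ) ≤ K * (n : ℝ) ^ (C - s.re) :=
          mul_nonneg hK0 (Real.rpow_nonneg (Nat.cast_nonneg n) _)
        simpa using this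
  have hsumnorm : Summable (fun n => ‖f n‖) :=
    Summable.of_nonneg_of_le (fun n => norm_nonneg _) hnorm
      ((Real.summable_nat_rpow.mpr (by linarith)).mul_left K)
  have hsumf : Summable f := hsumnorm.of_norm
  -- multiplicativity on coprime arguments
  have multA : ∀ m n : ℕ, 0 < m → 0 < n → Nat.Coprime m n → Nat.Coprime m N →
      A 1 (m * n) = A 1 m * A 1 n := by
    intro m n hm hn hmn hmN
    rw [hH2 m n 1 hm hn one_pos hmN, Statement8Aux.heckeRHS2_coprime ψ A hm hmn]
  have hmul : ∀ {m n : ℕ}, Nat.Coprime m n → f (m * n) = f m * f n := by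
    intro m n hmn
    rcases Nat.eq_zero_or_pos m with rfl | hm
    · have hn1 : n = 1 := by simpa [Nat.coprime_zero_left] using hmn
      subst hn1
      simp [hf0, hf1]
    rcases Nat.eq_zero_or_pos n with rfl | hn
    · have hm1 : m = 1 := by simpa [Nat.coprime_zero_right] using hmn
      subst hm1
      simp [hf0, hf1]
    simp only [hf]
    by_cases hmN : Nat.Coprime m N
    · by_cases hnN : Nat.Coprime n N
      · rw [if_pos ⟨Nat.mul_ne_zero hm.ne' hn.ne', Nat.Coprime.mul hmN hnN⟩,
          if_pos ⟨hm.ne', hmN⟩, if_pos ⟨hn.ne', hnN⟩,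
          multA m n hm hn hmn hmN, Nat.cast_mul, Nat.cast_mul, map_mul,
          Complex.natCast_mul_natCast_cpow]
        ring
      · rw [if_neg (by rintro ⟨-, h⟩; exact hnN (Nat.coprime_mul_iff_left.mp h).2),
          if_neg (show ¬(n ≠ 0 ∧ n.Coprime N) from fun hh => hnN hh.2), mul_zero]
    · rw [if_neg (by rintro ⟨-, h⟩; exact hmN (Nat.coprime_mul_iff_left.mp h).1),
        if_neg (show ¬(m ≠ 0 ∧ m.Coprime N) from fun hh => hmN hh.2), zero_mul]
  -- Euler product from Mathlib
  have euler := EulerProduct.eulerProduct_hasProd hf1 (fun {m n} h => hmul h) hsumnorm hf0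
  -- identify the local factors
  have hfac : ∀ p : Nat.Primes, (∑' e : ℕ, f ((p : ℕ) ^ e))
      = (if ¬ ((p : ℕ) ∣ N) then
        (1 - A 1 (p : ℕ) * χ ((p : ℕ) : ZMod M) * ((p : ℕ) : ℂ) ^ (-s)
           + A (p : ℕ) 1 * χ ((p : ℕ) : ZMod M) ^ 2 * ((p : ℕ) : ℂ) ^ (-(2 * s))
           - χ ((p : ℕ) : ZMod M) ^ 3 * ψ ((p : ℕ) : ZMod N) * ((p : ℕ) : ℂ) ^ (-(3 * s)))⁻¹
        else 1) := by
    intro p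
    obtain ⟨p, hp⟩ := p
    simp only
    by_cases hdvd : p ∣ N
    · rw [if_neg (by simpa using hdvd)]
      have hzero : (fun e : ℕ => f (p ^ e)) = fun e => if e = 0 then 1 else 0 := by
        funext e
        match e with
        | 0 => simpa using hf1
        | e + 1 =>
          rw [if_neg (by omega), hf]
          simp only
          rw [if_neg]
          rintro ⟨-, hcop⟩
          have hco : Nat.Coprime p N :=
            Nat.Coprime.coprime_dvd_left (dvd_pow_self p (Nat.succ_ne_zero e)) hcop
          have h1 : p ∣ 1 := hco ▸ Nat.dvd_gcd (dvd_refl p) hdvd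
          exact hp.ne_one (Nat.dvd_one.mp h1)
      rw [hzero, tsum_ite_eq]
    · rw [if_pos hdvd]
      have hpN : Nat.Coprime p N := (Nat.Prime.coprime_iff_not_dvd hp).mpr hdvd
      have hpkN : ∀ e : ℕ, Nat.Coprime (p ^ e) N := fun e => Nat.Coprime.pow_left _ hpN
      set X : ℂ := χ ((p : ℕ) : ZMod M) * ((p : ℕ) : ℂ) ^ (-s) with hX
      have hfp : ∀ e : ℕ, f (p ^ e) = A 1 (p ^ e) * X ^ e := by
        intro e
        rw [hf]
        simp only
        rw [if_pos ⟨(pow_pos hp.pos e).ne', hpkN e⟩, Nat.cast_pow, Nat.cast_pow, map_pow,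
          ← Complex.natCast_cpow_natCast_mul, Complex.cpow_nat_mul, hX, mul_pow, mul_assoc]
      -- Hecke recursion
      have h0 : A 1 (p ^ 0) = 1 := by rw [pow_zero, hA11]
      have h1 : A 1 (p ^ 1) = A 1 p := by rw [pow_one]
      have h2 : A 1 (p ^ 2) = A 1 p * A 1 (p ^ 1) - A p 1 := by
        have h := hH2 p (p ^ 1) 1 hp.pos (pow_pos hp.pos 1) one_pos hpN
        rw [Statement8Aux.heckeRHS2_prime ψ A hp 0, pow_zero] at h
        linear_combination -h
      have hrec : ∀ k : ℕ, A 1 (p ^ (k + 3))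
          = A 1 p * A 1 (p ^ (k + 2)) - A p 1 * A 1 (p ^ (k + 1))
            + ψ ((p : ℕ) : ZMod N) * A 1 (p ^ k) := by
        intro k
        have hA2 := hH2 p (p ^ (k + 2)) 1 hp.pos (pow_pos hp.pos _) one_pos hpN
        rw [Statement8Aux.heckeRHS2_prime ψ A hp (k + 1),
          show k + 1 + 2 = k + 3 from by omega] at hA2
        have hA1 := hH1 p (p ^ (k + 1)) 1 hp.pos (pow_pos hp.pos _) one_pos hpN
        rw [Statement8Aux.heckeRHS1_prime ψ A hp k] at hA1
        linear_combination hA1 - hA2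
      have hloc : Summable (fun e : ℕ => A 1 (p ^ e) * X ^ e) := by
        have heq : (fun e : ℕ => A 1 (p ^ e) * X ^ e) = fun e => f (p ^ e) :=
          funext fun e => (hfp e).symm
        rw [heq]
        exact hsumf.comp_injective (Nat.pow_right_injective hp.two_le)
      have hSL := Statement8Aux.local_factor h0 h1 h2 hrec hloc
      have hXpow2 : ((p : ℕ) : ℂ) ^ (-(2 * s)) = (((p : ℕ) : ℂ) ^ (-s)) ^ 2 := by
        rw [show -(2 * s) = ((2 : ℕ) : ℂ) * (-s) by push_cast; ring, Complex.cpow_nat_mul]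
      have hXpow3 : ((p : ℕ) : ℂ) ^ (-(3 * s)) = (((p : ℕ) : ℂ) ^ (-s)) ^ 3 := by
        rw [show -(3 * s) = ((3 : ℕ) : ℂ) * (-s) by push_cast; ring, Complex.cpow_nat_mul]
      have hLs : (1 - A 1 p * χ ((p : ℕ) : ZMod M) * ((p : ℕ) : ℂ) ^ (-s)
           + A p 1 * χ ((p : ℕ) : ZMod M) ^ 2 * ((p : ℕ) : ℂ) ^ (-(2 * s))
           - χ ((p : ℕ) : ZMod M) ^ 3 * ψ ((p : ℕ) : ZMod N) * ((p : ℕ) : ℂ) ^ (-(3 * s)))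
          = 1 - A 1 p * X + A p 1 * X ^ 2 - ψ ((p : ℕ) : ZMod N) * X ^ 3 := by
        rw [hXpow2, hXpow3, hX]
        ring
      rw [show (∑' e : ℕ, f (p ^ e)) = ∑' e : ℕ, A 1 (p ^ e) * X ^ e from tsum_congr hfp, hLs]
      exact eq_inv_of_mul_eq_one_left hSL
  have heulfun : (fun p : Nat.Primes => ∑' e : ℕ, f ((p : ℕ) ^ e))
      = fun p : Nat.Primes => (if ¬ ((p : ℕ) ∣ N) then
        (1 - A 1 (p : ℕ) * χ ((p : ℕ) : ZMod M) * ((p : ℕ) : ℂ) ^ (-s)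
           + A (p : ℕ) 1 * χ ((p : ℕ) : ZMod M) ^ 2 * ((p : ℕ) : ℂ) ^ (-(2 * s))
           - χ ((p : ℕ) : ZMod M) ^ 3 * ψ ((p : ℕ) : ZMod N) * ((p : ℕ) : ℂ) ^ (-(3 * s)))⁻¹
        else 1) := funext hfac
  rw [heulfun] at euler
  have hstfun : (fun n : ℕ => if Nat.Coprime (n + 1) N then
      A 1 (n + 1) * χ ((n + 1 : ℕ) : ZMod M) * ((n + 1 : ℕ) : ℂ) ^ (-s) else 0)
      = fun n : ℕ => f (n + 1) := by
    funext n
    rw [hf]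
    simp only
    by_cases h : Nat.Coprime (n + 1) N
    · rw [if_pos h, if_pos ⟨Nat.succ_ne_zero n, h⟩]
    · rw [if_neg h, if_neg (fun hh => h hh.2)]
  have hsumshift : Summable (fun n : ℕ => f (n + 1)) :=
    hsumf.comp_injective (fun a b hab => by omega)
  refine ⟨?_, ?_, ?_⟩
  · rw [hstfun]
    exact hsumshift
  · exact euler.multipliable
  · rw [hstfun, euler.tprod_eq, hsumf.tsum_eq_zero_add, hf0, zero_add]


end
end

section
/- Let a, b, c, d be real numbers with ad − bc = 1 and c ≠ 0, let x₁, x₂, x₃ be real and y₁, y₂ > 0, and set z₁ = x₁ + iy₁, σz₁ = (az₁+b)/(cz₁+d), so that Re(σz₁) and Im(σz₁) = y₁/|cz₁+d|² are real with Im(σz₁) > 0. Then there exist a real orthogonal 3×3 matrix k and a nonzero real scalar λ such that [[1,0,0],[0,a,b],[0,c,d]] · [[1, x₂, x₃ + dx₂/c + x₁x₂],[0,1,x₁],[0,0,1]] · diag(y₁y₂, y₁, 1) = λ · [[1, −cx₃, ax₃ + x₂/c − cx₃·Re(σz₁)],[0,1,Re(σz₁)],[0,0,1]] · diag(y₂|cz₁+d|·Im(σz₁),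 Im(σz₁), 1) · k; that is, the two matrices are equal modulo O(3,ℝ)·ℝ^× (Iwasawa decomposition identity on the generalized upper half plane of GL(3,ℝ)). -/
set_option maxHeartbeats 1000000


open Complex

noncomputable section

/-- The point `z₁ = x₁ + i y₁` of the complex upper half plane. -/
def zc (x₁ y₁ : ℝ) : ℂ := (x₁ : ℂ) + (y₁ : ℂ) * Complex.I

/-- The linear fractional transformation `σ z₁ = (a z₁ + b) / (c z₁ + d)`. -/
def sigmaZ (a b c d x₁ y₁ : ℝ) : ℂ :=
  ((a : ℂ) * zc x₁ y₁ + (b : ℂ)) / ((c : ℂ) * zc x₁ y₁ + (d : ℂ))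

/-- Iwasawa decomposition identity on the generalized upper half plane of
`GL(3,ℝ)`: with `z₁ = x₁ + i y₁` and `σ z₁ = (a z₁ + b)/(c z₁ + d)`, there exist an
orthogonal matrix `k` and a nonzero scalar `λ` with
`[[1,0,0],[0,a,b],[0,c,d]] · [[1,x₂,x₃+dx₂/c+x₁x₂],[0,1,x₁],[0,0,1]] · diag(y₁y₂,y₁,1)
  = λ • ([[1,−cx₃,ax₃+x₂/c−cx₃·Re(σz₁)],[0,1,Re(σz₁)],[0,0,1]]
      · diag(y₂|cz₁+d|·Im(σz₁), Im(σz₁), 1) · k)`. -/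
theorem statement_9 (a b c d x₁ x₂ x₃ y₁ y₂ : ℝ) (hdet : a * d - b * c = 1) (hc : c ≠ 0)
    (hy₁ : 0 < y₁) (hy₂ : 0 < y₂) :
    ∃ k : Matrix (Fin 3) (Fin 3) ℝ, k ∈ Matrix.orthogonalGroup (Fin 3) ℝ ∧
      ∃ lam : ℝ, lam ≠ 0 ∧
        (!![1, 0, 0; 0, a, b; 0, c, d] *
            !![1, x₂, x₃ + d * x₂ / c + x₁ * x₂; 0, 1, x₁; 0, 0, 1] *
            !![y₁ * y₂, 0, 0; 0, y₁, 0; 0, 0, 1])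
          = lam •
            (!![1, -c * x₃,
                  a * x₃ + x₂ / c - c * x₃ * (sigmaZ a b c d x₁ y₁).re;
                0, 1, (sigmaZ a b c d x₁ y₁).re;
                0, 0, 1] *
              !![y₂ * ‖(c : ℂ) * zc x₁ y₁ + (d : ℂ)‖ * (sigmaZ a b c d x₁ y₁).im,
                  0, 0;
                0, (sigmaZ a b c d x₁ y₁).im, 0;
                0, 0, 1] * k) := by
  have hb : b = (a*d-1)/c := by field_simp; linarith
  subst hb
  set r := ‖(c : ℂ) * zc x₁ y₁ + (d : ℂ)‖ with hr_def
  have hzim : ((c : ℂ) * zc x₁ y₁ + (d : ℂ)).im = c*y₁ := by simp [zc]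
  have hzne : ((c : ℂ) * zc x₁ y₁ + (d : ℂ)) ≠ 0 := by
    intro h
    have := hzim; rw [h] at this; simp at this
    rcases this with h | h; · exact hc h
    · exact hy₁.ne' h
  have hrpos : 0 < r := norm_pos_iff.mpr hzne
  have hr2 : r^2 = (c*x₁+d)^2 + (c*y₁)^2 := by
    rw [hr_def, Complex.sq_norm, Complex.normSq_apply]; simp [zc]; ring
  have hrne : r ≠ 0 := hrpos.ne'
  have hccpos : (0:ℝ) < c*c := mul_self_pos.mpr hc
  have hnpos : (0:ℝ) < (c*x₁+d)^2 + (c*y₁)^2 := by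
    nlinarith [sq_nonneg (c*x₁+d), mul_pos (mul_pos hccpos hy₁) hy₁]
  have hnne : ((c*x₁+d)^2 + (c*y₁)^2) ≠ 0 := hnpos.ne'
  have hs : (sigmaZ a ((a*d-1)/c) c d x₁ y₁).re
      = ((a*x₁+(a*d-1)/c)*(c*x₁+d) + a*y₁*(c*y₁)) / ((c*x₁+d)^2 + (c*y₁)^2) := by
    rw [sigmaZ, Complex.div_re]
    simp [zc, Complex.normSq_apply]
    rw [← add_div, div_eq_div_iff (by nlinarith) hnne]
    ring
  have ht : (sigmaZ a ((a*d-1)/c) c d x₁ y₁).im = y₁ / ((c*x₁+d)^2 + (c*y₁)^2) := by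
    rw [sigmaZ, Complex.div_im]
    simp [zc, Complex.normSq_apply]
    rw [← sub_div, div_eq_div_iff (by nlinarith) hnne]
    field_simp
    ring
  refine ⟨!![1,0,0; 0,(c*x₁+d)/r, -(c*y₁)/r; 0,(c*y₁)/r,(c*x₁+d)/r], ?_, r, hrne, ?_⟩
  · rw [Matrix.mem_orthogonalGroup_iff]
    ext i j
    fin_cases i <;> fin_cases j <;>
      simp [Matrix.mul_apply, Fin.sum_univ_three, Matrix.one_apply] <;>
      field_simp <;>
      first
        | linear_combination hr2
        | linear_combination -hr2
        | linear_combination 2*hr2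
        | linear_combination -2*hr2
        | ring
  · rw [Matrix.mul_assoc, ← Matrix.mul_smul]
    have hk : r • !![(1:ℝ),0,0; 0,(c*x₁+d)/r, -(c*y₁)/r; 0,(c*y₁)/r,(c*x₁+d)/r]
        = !![r,0,0; 0,c*x₁+d, -(c*y₁); 0,c*y₁,c*x₁+d] := by
      ext i j
      fin_cases i <;> fin_cases j <;>
        (try simp [Matrix.smul_apply, Matrix.vecHead, Matrix.vecTail]) <;>
        (try field_simp) <;> (try ring)
    rw [hk, hs, ht]
    ext i j
    fin_cases i <;> fin_cases j <;>
      (try simp [Matrix.mul_apply, Fin.sum_univ_three, Matrix.vecHead, Matrix.vecTail]) <;>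
      (try field_simp) <;> (try ring) <;>
      (try linear_combination -(y₁*y₂)*hr2) <;> (try linear_combination y₁*y₂*hr2) <;>
      (try linear_combination -hr2)

end
end

section
/- Let χ be a primitive Dirichlet character modulo c and m₂ an integer. (i) For every positive divisor m₁ of c with m₁ > 1, ∑_{a mod c, (a,c)=1} conj(χ)(a)·S(a, m₂; c/m₁) = 0. (ii) For m₁ = 1, ∑_{a mod c, (a,c)=1} conj(χ)(a)·S(a, m₂; c) = τ(conj(χ))·g(conj(χ), c, m₂); consequently this sum equals τ(conj(χ))²·χ(m₂) if (m₂, c) = 1 and equals 0 if (m₂, c) > 1. -/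
open Complex
open scoped Classical

noncomputable section

/-! ### Auxiliary lemmas -/

lemma eZMod_eq_stdAddChar (c : ℕ) [NeZero c] (x : ZMod c) :
    eZMod c x = ZMod.stdAddChar x := by
  rw [ZMod.stdAddChar_apply, ZMod.toCircle_apply, eZMod]
  push_cast
  ring_nf

lemma stdAddChar_div (c q : ℕ) [NeZero c] [NeZero q] (hq : q ∣ c) (j : ℕ) :
    ZMod.stdAddChar ((j : ZMod q)) = ZMod.stdAddChar (((j * (c / q) : ℕ) : ZMod c)) := by
  have h1 : ((j : ℤ) : ZMod q) = (j : ZMod q) := by push_cast; rfl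
  have h2 : (((j * (c / q) : ℕ) : ℤ) : ZMod c) = ((j * (c / q) : ℕ) : ZMod c) := by
    norm_cast
  rw [← h1, ← h2, ZMod.stdAddChar_coe, ZMod.stdAddChar_coe]
  congr 1
  have hc : (q : ℂ) * ((c / q : ℕ) : ℂ) = (c : ℂ) := by
    rw [← Nat.cast_mul, Nat.mul_div_cancel' hq]
  have hq0 : (q : ℂ) ≠ 0 := Nat.cast_ne_zero.mpr (NeZero.ne q)
  have hc0 : (c : ℂ) ≠ 0 := Nat.cast_ne_zero.mpr (NeZero.ne c)
  field_simp
  rw [← hc]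
  push_cast [Nat.cast_div_charZero hq, Int.cast_div_charZero (Int.natCast_dvd_natCast.mpr hq)]
  ring

lemma sum_units (c : ℕ) [NeZero c] (χ : DirichletCharacter ℂ c) (f : ZMod c → ℂ) :
    ∑ a : (ZMod c)ˣ, χ (a : ZMod c) * f (a : ZMod c) = ∑ x : ZMod c, χ x * f x := by
  classical
  have := Finset.sum_map Finset.univ ⟨(Units.val : (ZMod c)ˣ → ZMod c), Units.val_injective⟩
    (fun x => χ x * f x)
  rw [show (∑ a : (ZMod c)ˣ, χ (a : ZMod c) * f (a : ZMod c)) =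
      ∑ x ∈ Finset.univ.map ⟨(Units.val : (ZMod c)ˣ → ZMod c), Units.val_injective⟩, χ x * f x from
    this.symm]
  refine Finset.sum_subset (Finset.subset_univ _) (fun x _ hx => ?_)
  have hu : ¬ IsUnit x := fun h =>
    hx (Finset.mem_map.mpr ⟨h.unit, Finset.mem_univ _, h.unit_spec⟩)
  rw [χ.map_nonunit hu, zero_mul]

lemma key_sum_s10 (c : ℕ) [NeZero c] {χ : DirichletCharacter ℂ c}
    (hχ : χ.IsPrimitive) (n : ZMod c) :
    ∑ a : (ZMod c)ˣ, χ (a : ZMod c) * ZMod.stdAddChar (n * (a : ZMod c))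
      = χ⁻¹ n * gaussSum χ ZMod.stdAddChar := by
  rw [sum_units c χ (fun x => ZMod.stdAddChar (n * x)),
    ← gaussSum_mulShift_of_isPrimitive ZMod.stdAddChar hχ n]
  simp [gaussSum, AddChar.mulShift_apply]

lemma conjChar_apply {n : ℕ} (χ : DirichletCharacter ℂ n) (a : ZMod n) :
    conjChar χ a = (starRingEnd ℂ) (χ a) := rfl

lemma conjChar_conjChar {n : ℕ} (χ : DirichletCharacter ℂ n) : conjChar (conjChar χ) = χ := by
  ext a
  simp [conjChar_apply]

lemma conjChar_changeLevel {n m : ℕ} (h : n ∣ m) (χ : DirichletCharacter ℂ n) :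
    conjChar (DirichletCharacter.changeLevel h χ)
      = DirichletCharacter.changeLevel h (conjChar χ) := by
  ext a
  rw [conjChar_apply, DirichletCharacter.changeLevel_eq_cast_of_dvd,
    DirichletCharacter.changeLevel_eq_cast_of_dvd, conjChar_apply]

lemma conjChar_factorsThrough_iff {n : ℕ} (χ : DirichletCharacter ℂ n) (d : ℕ) :
    (conjChar χ).FactorsThrough d ↔ χ.FactorsThrough d := by
  constructor
  · rintro ⟨h, χ₀, hχ₀⟩
    exact ⟨h, conjChar χ₀, by rw [← conjChar_changeLevel, ← hχ₀, conjChar_conjChar]⟩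
  · rintro ⟨h, χ₀, hχ₀⟩
    exact ⟨h, conjChar χ₀, by rw [← conjChar_changeLevel, ← hχ₀]⟩

lemma conjChar_isPrimitive {n : ℕ} {χ : DirichletCharacter ℂ n} (h : χ.IsPrimitive) :
    (conjChar χ).IsPrimitive := by
  have hs : DirichletCharacter.conductorSet (conjChar χ) = DirichletCharacter.conductorSet χ := by
    ext d
    exact conjChar_factorsThrough_iff χ d
  rw [DirichletCharacter.IsPrimitive, DirichletCharacter.conductor, hs]
  exact h

lemma conjChar_inv_apply_unit {c : ℕ} [NeZero c] (χ : DirichletCharacter ℂ c) (a : (ZMod c)ˣ) :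
    (conjChar χ)⁻¹ ((a : ZMod c)) = χ ((a : ZMod c)) := by
  rw [MulChar.inv_apply_eq_inv', conjChar_apply]
  refine inv_eq_of_mul_eq_one_right ?_
  have h : ‖χ ((a : ZMod c))‖ = 1 := χ.unit_norm_eq_one a
  rw [mul_comm, Complex.mul_conj, Complex.normSq_eq_norm_sq, h]
  norm_num

lemma main_sum (c : ℕ) [NeZero c] (χ : DirichletCharacter ℂ c)
    (hχ : (conjChar χ).IsPrimitive) (m₂ : ℤ) (q : ℕ) [NeZero q] (hq : q ∣ c) :
    ∑ a : (ZMod c)ˣ, conjChar χ ((a : ZMod c)) * kloosterman (((a : ZMod c).val : ℤ)) m₂ q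
      = ∑ d : (ZMod q)ˣ, ZMod.stdAddChar ((m₂ : ZMod q) * ((d⁻¹ : (ZMod q)ˣ) : ZMod q)) *
          ((conjChar χ)⁻¹ ((((d : ZMod q).val * (c / q) : ℕ) : ZMod c)) *
            gaussSum (conjChar χ) ZMod.stdAddChar) := by
  have hq0 : q ≠ 0 := NeZero.ne q
  simp only [kloosterman, dif_neg hq0]
  simp only [Finset.mul_sum]
  rw [Finset.sum_comm]
  refine Finset.sum_congr rfl fun d _ => ?_
  have hterm : ∀ a : (ZMod c)ˣ,
      conjChar χ ((a : ZMod c)) * eZMod q ((((a : ZMod c).val : ℤ) : ZMod q) * (d : ZMod q)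
          + (m₂ : ZMod q) * ((d⁻¹ : (ZMod q)ˣ) : ZMod q))
        = conjChar χ ((a : ZMod c)) *
            ZMod.stdAddChar (((((d : ZMod q).val * (c / q) : ℕ) : ZMod c)) * (a : ZMod c)) *
          ZMod.stdAddChar ((m₂ : ZMod q) * ((d⁻¹ : (ZMod q)ˣ) : ZMod q)) := by
    intro a
    rw [eZMod_eq_stdAddChar, AddChar.map_add_eq_mul]
    have h1 : ((((a : ZMod c).val : ℤ) : ZMod q) * (d : ZMod q))
        = (((a : ZMod c).val * (d : ZMod q).val : ℕ) : ZMod q) := by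
      push_cast [ZMod.natCast_zmod_val]
      rfl
    rw [h1, stdAddChar_div c q hq]
    have h2 : (((a : ZMod c).val * (d : ZMod q).val * (c / q) : ℕ) : ZMod c)
        = ((((d : ZMod q).val * (c / q) : ℕ) : ZMod c)) * (a : ZMod c) := by
      push_cast [ZMod.natCast_zmod_val]
      ring
    rw [h2]
    ring
  rw [Finset.sum_congr rfl (fun a _ => hterm a), ← Finset.sum_mul,
    key_sum_s10 c hχ ((((d : ZMod q).val * (c / q) : ℕ) : ZMod c))]
  ring

lemma gSum_eq (c : ℕ) [NeZero c] (χ : DirichletCharacter ℂ c) (m : ℤ) :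
    gSum χ c m
      = ∑ u : (ZMod c)ˣ, χ ((u : ZMod c)) * ZMod.stdAddChar ((m : ZMod c) * (u : ZMod c)) := by
  rw [gSum, dif_neg (NeZero.ne c)]
  refine Finset.sum_congr rfl fun u _ => ?_
  rw [eZMod_eq_stdAddChar, ZMod.natCast_zmod_val, mul_comm]

lemma tau_eq (c : ℕ) [NeZero c] (χ : DirichletCharacter ℂ c) :
    tau χ = gaussSum χ ZMod.stdAddChar := by
  rw [tau, gSum_eq, gaussSum, ← sum_units c χ (fun x => ZMod.stdAddChar x)]
  simp

lemma gSum_eq' (c : ℕ) [NeZero c] {χ : DirichletCharacter ℂ c} (hχ : χ.IsPrimitive) (m : ℤ) :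
    gSum χ c m = χ⁻¹ ((m : ZMod c)) * tau χ := by
  rw [gSum_eq, tau_eq, key_sum_s10 c hχ]

lemma isUnit_intCast_of_gcd_eq_one (c : ℕ) [NeZero c] {m : ℤ} (h : Int.gcd m (c : ℤ) = 1) :
    IsUnit ((m : ZMod c)) := by
  obtain ⟨u, v, huv⟩ : IsCoprime m (c : ℤ) := Int.isCoprime_iff_gcd_eq_one.mpr h
  have h2 : ((u : ZMod c)) * ((m : ZMod c)) = 1 := by
    have := congrArg (fun x : ℤ => (x : ZMod c)) huv
    push_cast at this
    simpa [ZMod.natCast_self] using this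
  exact IsUnit.of_mul_eq_one _ (by rw [mul_comm] at h2; exact h2)

lemma not_isUnit_intCast_of_one_lt_gcd (c : ℕ) [NeZero c] {m : ℤ}
    (h : 1 < Int.gcd m (c : ℤ)) : ¬ IsUnit ((m : ZMod c)) := by
  intro hu
  obtain ⟨w, hw⟩ := hu.exists_right_inv
  have hb : ((m * ((w.val : ℤ)) - 1 : ℤ) : ZMod c) = 0 := by
    push_cast
    rw [ZMod.natCast_zmod_val, hw, sub_self]
  have hdvd : (c : ℤ) ∣ m * ((w.val : ℤ)) - 1 := (ZMod.intCast_zmod_eq_zero_iff_dvd _ c).mp hb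
  have h1 : (Int.gcd m (c : ℤ) : ℤ) ∣ 1 := by
    have hm : (Int.gcd m (c : ℤ) : ℤ) ∣ m := Int.gcd_dvd_left _ _
    have hc : (Int.gcd m (c : ℤ) : ℤ) ∣ (c : ℤ) := Int.gcd_dvd_right _ _
    have h2 := dvd_sub (hm.mul_right ((w.val : ℤ))) (hc.trans hdvd)
    simpa using h2
  have h3 := Int.ofNat_dvd.mp (by exact_mod_cast h1 : (Int.gcd m (c : ℤ) : ℤ) ∣ ((1 : ℕ) : ℤ))
  have := Nat.le_of_dvd one_pos h3
  omega


/-- for a primitive Dirichlet character `χ` mod `c` and any integer `m₂`: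
(i) for any divisor `m₁ > 1` of `c`, `∑_{a mod c, (a,c)=1} conj(χ)(a) S(a, m₂; c/m₁) = 0`;
(ii) for `m₁ = 1`, the sum equals `τ(conj χ) g(conj χ, c, m₂)`, hence `τ(conj χ)² χ(m₂)`
if `(m₂,c) = 1` and `0` if `(m₂,c) > 1`. -/
theorem statement_10 (c : ℕ) [NeZero c] (χ : DirichletCharacter ℂ c) (hprim : χ.IsPrimitive)
    (m₂ : ℤ) :
    (∀ m₁ ∈ c.divisors, 1 < m₁ →
      ∑ a : (ZMod c)ˣ,
        conjChar χ ((a : ZMod c)) * kloosterman (((a : ZMod c).val : ℤ)) m₂ (c / m₁) = 0) ∧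
    (∑ a : (ZMod c)ˣ,
        conjChar χ ((a : ZMod c)) * kloosterman (((a : ZMod c).val : ℤ)) m₂ c
      = tau (conjChar χ) * gSum (conjChar χ) c m₂) ∧
    (Int.gcd m₂ (c : ℤ) = 1 →
      ∑ a : (ZMod c)ˣ,
        conjChar χ ((a : ZMod c)) * kloosterman (((a : ZMod c).val : ℤ)) m₂ c
        = tau (conjChar χ) ^ 2 * χ ((m₂ : ZMod c))) ∧
    (1 < Int.gcd m₂ (c : ℤ) →
      ∑ a : (ZMod c)ˣ,
        conjChar χ ((a : ZMod c)) * kloosterman (((a : ZMod c).val : ℤ)) m₂ c = 0) := by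
  have hχ' : (conjChar χ).IsPrimitive := conjChar_isPrimitive hprim
  have hG : gaussSum (conjChar χ) ZMod.stdAddChar = tau (conjChar χ) := (tau_eq c _).symm
  have part2 : ∑ a : (ZMod c)ˣ,
      conjChar χ ((a : ZMod c)) * kloosterman (((a : ZMod c).val : ℤ)) m₂ c
      = tau (conjChar χ) * gSum (conjChar χ) c m₂ := by
    rw [main_sum c χ hχ' m₂ c dvd_rfl]
    have hcc : c / c = 1 := Nat.div_self (Nat.pos_of_ne_zero (NeZero.ne c))
    simp only [hcc, mul_one]
    have hterm : ∀ d : (ZMod c)ˣ,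
        ZMod.stdAddChar ((m₂ : ZMod c) * ((d⁻¹ : (ZMod c)ˣ) : ZMod c)) *
          ((conjChar χ)⁻¹ ((((d : ZMod c).val : ℕ) : ZMod c)) *
            gaussSum (conjChar χ) ZMod.stdAddChar)
        = ((conjChar χ) (((d⁻¹ : (ZMod c)ˣ) : ZMod c)) *
            ZMod.stdAddChar ((m₂ : ZMod c) * ((d⁻¹ : (ZMod c)ˣ) : ZMod c))) *
            gaussSum (conjChar χ) ZMod.stdAddChar := by
      intro d
      rw [ZMod.natCast_zmod_val, MulChar.inv_apply, Ring.inverse_unit]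
      ring
    rw [Finset.sum_congr rfl (fun d _ => hterm d), ← Finset.sum_mul]
    rw [Fintype.sum_equiv (Equiv.inv (ZMod c)ˣ)
      (fun d : (ZMod c)ˣ => (conjChar χ) (((d⁻¹ : (ZMod c)ˣ) : ZMod c)) *
        ZMod.stdAddChar ((m₂ : ZMod c) * ((d⁻¹ : (ZMod c)ˣ) : ZMod c)))
      (fun u : (ZMod c)ˣ => (conjChar χ) ((u : ZMod c)) *
        ZMod.stdAddChar ((m₂ : ZMod c) * (u : ZMod c)))
      (fun d => rfl)]
    rw [← gSum_eq, hG]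
    ring
  refine ⟨?_, part2, ?_, ?_⟩
  · intro m₁ hm₁ hm₁1
    obtain ⟨hdvd, hc0⟩ := Nat.mem_divisors.mp hm₁
    haveI : NeZero (c / m₁) := ⟨by
      have := Nat.div_pos (Nat.le_of_dvd (Nat.pos_of_ne_zero hc0) hdvd) (by omega)
      omega⟩
    rw [main_sum c χ hχ' m₂ (c / m₁) (Nat.div_dvd_of_dvd hdvd)]
    have hcq : c / (c / m₁) = m₁ := Nat.div_div_self hdvd hc0
    refine Finset.sum_eq_zero fun d _ => ?_
    rw [hcq]
    have hnu : ¬ IsUnit ((((d : ZMod (c / m₁)).val * m₁ : ℕ) : ZMod c)) := by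
      rw [ZMod.isUnit_iff_coprime]
      intro hcop
      have hg : Nat.gcd ((d : ZMod (c / m₁)).val * m₁) c = 1 := hcop
      have hdg : m₁ ∣ Nat.gcd ((d : ZMod (c / m₁)).val * m₁) c :=
        Nat.dvd_gcd (dvd_mul_left _ _) hdvd
      rw [hg] at hdg
      exact absurd (Nat.dvd_one.mp hdg) (by omega)
    rw [MulChar.map_nonunit _ hnu, zero_mul, mul_zero]
  · intro hgcd
    rw [part2, gSum_eq' c hχ' m₂]
    obtain ⟨u, huu⟩ := isUnit_intCast_of_gcd_eq_one c hgcd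
    rw [← huu, conjChar_inv_apply_unit, huu]
    ring
  · intro hgcd
    rw [part2, gSum_eq' c hχ' m₂,
      MulChar.map_nonunit _ (not_isUnit_intCast_of_one_lt_gcd c hgcd)]
    ring

end
end
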